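/- arXiv:1803.05721 — 7 statements merged into one kernel-verified Lean document; each statement's English description precedes it below -/
import Mathlib

section
/- Let R be a commutative ring and n ≥ 3. The image ∧²(E(n,R)) of the elementary subgroup E(n,R) under the exterior square homomorphism is a normal subgroup of the image ∧²(GL_n(R)) of the general linear group: ∧²(E(n,R)) ⊴ ∧²(GL_n(R)). -/
open Finset MvPolynomial Matrix

/-- `V n` is the set `∧²[n]` of 2-element subsets of `[n] = {1, …, n}`
(modelled on `Fin n`). -/
abbrev V (n : ℕ) := {I : Finset (Fin n) // I.card = 2}

/-- The variable `x_S` of the polynomial ring `R[x_I : I ∈ ∧²[n]]`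
(interpreted as `0` if `S` is not a 2-element set, a case which never occurs below). -/
noncomputable def var2 (R : Type*) [CommRing R] (n : ℕ) (S : Finset (Fin n)) :
    MvPolynomial (V n) R :=
  if h : S.card = 2 then MvPolynomial.X ⟨S, h⟩ else 0

/-- The Plücker polynomial `f_{i,J} = Σ_{h=1}^{3} (−1)^h x_{{i,j_h}} x_{J∖{j_h}}`,
where `J = {j₁ < j₂ < j₃}`; the exponent `h` is recovered as the number of elements
of `J` that are `≤ j_h`. -/
noncomputable def pluckerPoly (R : Type*) [CommRing R] (n : ℕ) (i : Fin n)
    (J : Finset (Fin n)) : MvPolynomial (V n) R :=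
  ∑ j ∈ J, ((-1 : ℤ) ^ (J.filter (fun a => a ≤ j)).card) •
    (var2 R n {i, j} * var2 R n (J.erase j))

/-- The Plücker ideal `Plu(n,R)`, generated by all Plücker polynomials. -/
noncomputable def pluIdeal (R : Type*) [CommRing R] (n : ℕ) :
    Ideal (MvPolynomial (V n) R) :=
  Ideal.span {p | ∃ (i : Fin n) (J : Finset (Fin n)), i ∉ J ∧ J.card = 3 ∧
    p = pluckerPoly R n i J}

/-- `sign(I,J)`: the sign of the permutation sorting the concatenation of the increasing
lists of `I` and of `J` into increasing order, computed as `(−1)^(number of inversions)`. -/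
def signIJ {n : ℕ} (I J : Finset (Fin n)) : ℤ :=
  (-1) ^ (((I ×ˢ J).filter (fun p => p.2 < p.1)).card)

/-- The smaller element of a 2-element subset. -/
def lo {n : ℕ} (I : V n) : Fin n :=
  I.1.min' (Finset.card_pos.mp (by rw [I.2]; norm_num))

/-- The larger element of a 2-element subset. -/
def hi {n : ℕ} (I : V n) : Fin n :=
  I.1.max' (Finset.card_pos.mp (by rw [I.2]; norm_num))

/-- The exterior square (Cauchy–Binet) of a matrix: the `N×N` matrix, indexed by
2-element subsets, whose entry at `({i₁<i₂},{j₁<j₂})` is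
`x_{i₁j₁}x_{i₂j₂} − x_{i₁j₂}x_{i₂j₁}`. -/
def wedge {R : Type*} [CommRing R] {n : ℕ} (x : Matrix (Fin n) (Fin n) R) :
    Matrix (V n) (V n) R :=
  fun I J => x (lo I) (lo J) * x (hi I) (hi J) - x (lo I) (hi J) * x (hi I) (lo J)

/-- The elementary transvection `t_{S,T}(ξ) = e + ξ·e_{S,T}` of `GL_N(R)`, for distinct
2-element subsets `S, T` (interpreted as the identity in the degenerate cases, which
never occur below). -/
def transvN (R : Type*) [CommRing R] (n : ℕ) (S T : Finset (Fin n)) (ξ : R) :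
    Matrix (V n) (V n) R :=
  if h : S.card = 2 ∧ T.card = 2 ∧ S ≠ T then
    1 + Matrix.single ⟨S, h.1⟩ ⟨T, h.2.1⟩ ξ
  else 1

/-- The exterior number `a_{A,C}^H(g) = Σ_{(B,D)} sign(B,D)·g_{A,B}·g_{C,D}`, the sum over
all ordered pairs `(B,D)` of disjoint 2-element subsets with `B ∪ D = H`. -/
def extNum {R : Type*} [CommRing R] {n : ℕ} (g : Matrix (V n) (V n) R)
    (H : Finset (Fin n)) (A C : V n) : R :=
  ∑ B : V n, ∑ D : V n,
    if B.1 ∩ D.1 = ∅ ∧ B.1 ∪ D.1 = H then (signIJ B.1 D.1 : R) * (g A B * g C D) else 0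

/-- The 4×4 minor `M_I^J(x)` with rows `I` and columns `J` (both 4-element sets). -/
noncomputable def minor4 {R : Type*} [CommRing R] {n : ℕ}
    (x : Matrix (Fin n) (Fin n) R) (I J : Finset (Fin n)) : R :=
  if h : I.card = 4 ∧ J.card = 4 then
    Matrix.det (Matrix.of fun a b : Fin 4 =>
      x ↑(I.orderIsoOfFin h.1 a) ↑(J.orderIsoOfFin h.2 b))
  else 0

/-- The elementary group `E(n,R)`: the subgroup of `GL_n(R)` generated by the elementary
transvections `t_{i,j}(ξ) = e + ξ·e_{i,j}`, `i ≠ j`. -/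
def elemGroup (R : Type*) [CommRing R] (n : ℕ) :
    Subgroup (Matrix.GeneralLinearGroup (Fin n) R) :=
  Subgroup.closure {x | ∃ (i j : Fin n) (ξ : R), i ≠ j ∧
    (x : Matrix (Fin n) (Fin n) R) = 1 + Matrix.single i j ξ}

/-- `g` satisfies the exterior-number conditions with witness `θ`. -/
def extCond {R : Type*} [CommRing R] {n : ℕ} (g : Matrix (V n) (V n) R)
    (θ : Finset (Fin n) → Finset (Fin n) → R) : Prop :=
  ∀ H : Finset (Fin n), H.card = 4 → ∀ A C : V n,
    (¬ Disjoint A.1 C.1 → extNum g H A C = 0) ∧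
    (Disjoint A.1 C.1 → extNum g H A C = (signIJ A.1 C.1 : R) * θ (A.1 ∪ C.1) H)

/-- The symmetric matrix `B_𝓘` with `(B_𝓘)_{M,L} = sign(M,L)` if `M ⊔ L = 𝓘`
and `0` otherwise. -/
def bMat (R : Type*) [CommRing R] (n : ℕ) (𝓘 : Finset (Fin n)) :
    Matrix (V n) (V n) R :=
  fun M L => if M.1 ∩ L.1 = ∅ ∧ M.1 ∪ L.1 = 𝓘 then (signIJ M.1 L.1 : R) else 0


namespace S3
variable {R : Type*} [CommRing R] {n : ℕ}

lemma vmv_mul (u v u' v' : Fin n → R) :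
    vecMulVec u v * vecMulVec u' v' = (v ⬝ᵥ u') • vecMulVec u v' := by
  ext a b
  simp only [Matrix.mul_apply, vecMulVec_apply, Matrix.smul_apply, smul_eq_mul, dotProduct,
    Finset.sum_mul]
  exact Finset.sum_congr rfl fun k _ => by ring

lemma vmv_add_left (u₁ u₂ v : Fin n → R) :
    vecMulVec (u₁ + u₂) v = vecMulVec u₁ v + vecMulVec u₂ v := by
  ext a b; simp [vecMulVec_apply, add_mul]

lemma vmv_add_right (u v₁ v₂ : Fin n → R) :
    vecMulVec u (v₁ + v₂) = vecMulVec u v₁ + vecMulVec u v₂ := by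
  ext a b; simp [vecMulVec_apply, mul_add]

/-- the unit `1 + u vᵀ` when `v ⬝ u = 0`. -/
def unitAdd (u v : Fin n → R) (h : v ⬝ᵥ u = 0) : GL (Fin n) R where
  val := 1 + vecMulVec u v
  inv := 1 - vecMulVec u v
  val_inv := by
    have h2 : vecMulVec u v * vecMulVec u v = 0 := by rw [vmv_mul, h, zero_smul]
    simp only [mul_sub, sub_mul, mul_add, add_mul, mul_one, one_mul, h2]; abel
  inv_val := by
    have h2 : vecMulVec u v * vecMulVec u v = 0 := by rw [vmv_mul, h, zero_smul]
    simp only [mul_sub, sub_mul, mul_add, add_mul, mul_one, one_mul, h2]; abel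

@[simp] lemma unitAdd_val (u v : Fin n → R) (h) :
    (unitAdd u v h : Matrix (Fin n) (Fin n) R) = 1 + vecMulVec u v := rfl

lemma unitAdd_congr {u v u' v' : Fin n → R} (h h') (he : vecMulVec u v = vecMulVec u' v') :
    unitAdd u v h = unitAdd u' v' h' := Units.ext (by simp [he])

lemma unitAdd_zero_left (v : Fin n → R) (h) : unitAdd (0 : Fin n → R) v h = 1 :=
  Units.ext (by ext a b; simp [vecMulVec_apply])

lemma unitAdd_zero_right (u : Fin n → R) (h) : unitAdd u (0 : Fin n → R) h = 1 :=
  Units.ext (by ext a b; simp [vecMulVec_apply])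

lemma unitAdd_mul_left (u₁ u₂ v : Fin n → R) (h1 h2 h12) :
    unitAdd u₁ v h1 * unitAdd u₂ v h2 = unitAdd (u₁ + u₂) v h12 := by
  refine Units.ext ?_
  have : vecMulVec u₁ v * vecMulVec u₂ v = 0 := by rw [vmv_mul, h2, zero_smul]
  simp only [Units.val_mul, unitAdd_val, vmv_add_left]
  simp only [mul_add, add_mul, mul_one, one_mul, this]; abel

lemma unitAdd_mul_right (u v₁ v₂ : Fin n → R) (h1 h2 h12) :
    unitAdd u v₁ h1 * unitAdd u v₂ h2 = unitAdd u (v₁ + v₂) h12 := by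
  refine Units.ext ?_
  have : vecMulVec u v₁ * vecMulVec u v₂ = 0 := by rw [vmv_mul, h1, zero_smul]
  simp only [Units.val_mul, unitAdd_val, vmv_add_right]
  simp only [mul_add, add_mul, mul_one, one_mul, this]; abel

lemma vmv_single_single (i j : Fin n) (ξ : R) :
    vecMulVec (Pi.single i ξ) (Pi.single j (1 : R)) = Matrix.single i j ξ := by
  ext a b
  simp only [vecMulVec_apply, Matrix.single, of_apply, Pi.single_apply]
  by_cases hi : i = a <;> by_cases hj : j = b <;>
    simp [Pi.single_apply, hi, hj, eq_comm]

/-- generators -/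
lemma gen_mem (i j : Fin n) (ξ : R) (hij : i ≠ j) (h) :
    unitAdd (Pi.single i ξ) (Pi.single j (1 : R)) h ∈ elemGroup R n := by
  apply Subgroup.subset_closure
  exact ⟨i, j, ξ, hij, by rw [unitAdd_val, vmv_single_single]⟩

lemma single_mem (k m : Fin n) (c : R) (ξ : R) (h) :
    unitAdd (Pi.single k c : Fin n → R) (Pi.single m ξ) h ∈ elemGroup R n := by
  by_cases hkm : k = m
  · subst hkm
    have h0 : ξ * c = 0 := by simpa [dotProduct_single, Pi.single_apply] using h
    have : unitAdd (Pi.single k c : Fin n → R) (Pi.single k ξ) h = 1 := by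
      refine Units.ext ?_
      rw [unitAdd_val]
      have : vecMulVec (Pi.single k c : Fin n → R) (Pi.single k ξ) = 0 := by
        ext a b
        simp only [vecMulVec_apply, Pi.single_apply, Matrix.zero_apply]
        by_cases ha : a = k <;> by_cases hb : b = k <;>
          simp [ha, hb, mul_comm c ξ, h0]
      rw [this, add_zero, Units.val_one]
    rw [this]; exact one_mem _
  · have he : vecMulVec (Pi.single k c : Fin n → R) (Pi.single m ξ)
        = vecMulVec (Pi.single k (c * ξ) : Fin n → R) (Pi.single m (1 : R)) := by
      ext a b
      simp only [vecMulVec_apply, Pi.single_apply]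
      by_cases ha : a = k <;> by_cases hb : b = m <;> simp [ha, hb]
    have h' : (Pi.single m (1:R)) ⬝ᵥ (Pi.single k (c*ξ) : Fin n → R) = 0 := by
      simp [single_dotProduct, Pi.single_apply, Ne.symm hkm, hkm]
    rw [unitAdd_congr h h' he]
    exact gen_mem k m (c * ξ) hkm h'

/-- column type: `1 + u e_kᵀ`, `u k = 0`. -/
lemma col_mem (k : Fin n) (u : Fin n → R) (hu : u k = 0) (h) :
    unitAdd u (Pi.single k (1 : R)) h ∈ elemGroup R n := by
  have main : ∀ T : Finset (Fin n), ∀ u : Fin n → R, u k = 0 → (∀ m ∉ T, u m = 0) →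
      ∀ h, unitAdd u (Pi.single k (1 : R)) h ∈ elemGroup R n := by
    intro T
    induction T using Finset.induction_on with
    | empty =>
      intro u hk hsupp h
      have : u = 0 := funext fun m => hsupp m (Finset.notMem_empty m)
      subst this
      rw [unitAdd_zero_left]; exact one_mem _
    | @insert a T ha ih =>
      intro u hk hsupp h
      set u₁ : Fin n → R := Function.update u a 0 with hu₁
      set u₂ : Fin n → R := Pi.single a (u a) with hu₂
      have hsum : u = u₁ + u₂ := by
        funext m
        by_cases hm : m = a
        · subst hm; simp [hu₁, hu₂]
        · simp [hu₁, hu₂, Function.update_of_ne hm, Pi.single_apply, hm]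
      have h1 : (Pi.single k (1:R)) ⬝ᵥ u₁ = 0 := by
        rw [single_dotProduct, one_mul]
        by_cases hak : a = k
        · subst hak; simp [hu₁]
        · simp [hu₁, Function.update_of_ne (Ne.symm hak), hk]
      have h2 : (Pi.single k (1:R)) ⬝ᵥ u₂ = 0 := by
        rw [single_dotProduct, one_mul, hu₂]
        by_cases hak : k = a
        · subst hak; simp [hk]
        · simp [Pi.single_apply, hak]
      have h12 : (Pi.single k (1:R)) ⬝ᵥ (u₁ + u₂) = 0 := by rw [← hsum]; exact h
      have e2 : unitAdd u (Pi.single k (1:R)) h = unitAdd (u₁ + u₂) (Pi.single k (1:R)) h12 :=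
        unitAdd_congr _ _ (by rw [hsum])
      rw [e2, ← unitAdd_mul_left u₁ u₂ _ h1 h2 h12]
      refine mul_mem ?_ ?_
      · refine ih u₁ ?_ ?_ h1
        · by_cases hak : a = k
          · subst hak; simp [hu₁]
          · simp [hu₁, Function.update_of_ne (Ne.symm hak), hk]
        · intro m hm
          by_cases hm' : m = a
          · subst hm'; simp [hu₁]
          · have : m ∉ insert a T := by simp [hm, hm']
            simp [hu₁, Function.update_of_ne hm', hsupp m this]
      · exact single_mem a k (u a) 1 h2
  exact main Finset.univ u hu (fun m hm => absurd (Finset.mem_univ m) hm) h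

/-- row type: `1 + (c e_k) vᵀ`, `v k = 0`. -/
lemma row_mem (k : Fin n) (c : R) (v : Fin n → R) (hv : v k = 0) (h) :
    unitAdd (Pi.single k c : Fin n → R) v h ∈ elemGroup R n := by
  have main : ∀ T : Finset (Fin n), ∀ v : Fin n → R, v k = 0 → (∀ m ∉ T, v m = 0) →
      ∀ h, unitAdd (Pi.single k c : Fin n → R) v h ∈ elemGroup R n := by
    intro T
    induction T using Finset.induction_on with
    | empty =>
      intro v hk hsupp h
      have : v = 0 := funext fun m => hsupp m (Finset.notMem_empty m)
      subst this
      rw [unitAdd_zero_right]; exact one_mem _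
    | @insert a T ha ih =>
      intro v hk hsupp h
      set v₁ : Fin n → R := Function.update v a 0 with hv₁
      set v₂ : Fin n → R := Pi.single a (v a) with hv₂
      have hsum : v = v₁ + v₂ := by
        funext m
        by_cases hm : m = a
        · subst hm; simp [hv₁, hv₂]
        · simp [hv₁, hv₂, Function.update_of_ne hm, Pi.single_apply, hm]
      have h1 : v₁ ⬝ᵥ (Pi.single k c : Fin n → R) = 0 := by
        rw [dotProduct_single]
        by_cases hak : a = k
        · subst hak; simp [hv₁]
        · simp [hv₁, Function.update_of_ne (Ne.symm hak), hk]
      have h2 : v₂ ⬝ᵥ (Pi.single k c : Fin n → R) = 0 := by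
        rw [dotProduct_single, hv₂]
        by_cases hak : k = a
        · subst hak; simp [hk]
        · simp [Pi.single_apply, hak]
      have h12 : (v₁ + v₂) ⬝ᵥ (Pi.single k c : Fin n → R) = 0 := by rw [← hsum]; exact h
      have e2 : unitAdd (Pi.single k c : Fin n → R) v h
          = unitAdd (Pi.single k c : Fin n → R) (v₁ + v₂) h12 :=
        unitAdd_congr _ _ (by rw [hsum])
      rw [e2, ← unitAdd_mul_right _ v₁ v₂ h1 h2 h12]
      refine mul_mem ?_ ?_
      · refine ih v₁ ?_ ?_ h1
        · by_cases hak : a = k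
          · subst hak; simp [hv₁]
          · simp [hv₁, Function.update_of_ne (Ne.symm hak), hk]
        · intro m hm
          by_cases hm' : m = a
          · subst hm'; simp [hv₁]
          · have : m ∉ insert a T := by simp [hm, hm']
            simp [hv₁, Function.update_of_ne hm', hsupp m this]
      · exact single_mem k a c (v a) h2
  exact main Finset.univ v hv (fun m hm => absurd (Finset.mem_univ m) hm) h

/-- Suslin commutator step: `1 + s vᵀ ∈ E` when `s k = v k = 0` and `v ⬝ s = 0`. -/
lemma comm_mem (k : Fin n) (s v : Fin n → R) (hs : s k = 0) (hv : v k = 0)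
    (h : v ⬝ᵥ s = 0) : unitAdd s v h ∈ elemGroup R n := by
  have h1 : (Pi.single k (1:R)) ⬝ᵥ s = 0 := by rw [single_dotProduct, one_mul, hs]
  have h2 : v ⬝ᵥ (Pi.single k (1:R) : Fin n → R) = 0 := by
    rw [dotProduct_single, mul_one, hv]
  set A := unitAdd s (Pi.single k (1:R)) h1 with hA
  set B := unitAdd (Pi.single k (1:R) : Fin n → R) v h2 with hB
  set a := vecMulVec s (Pi.single k (1:R)) with ha
  set b := vecMulVec (Pi.single k (1:R) : Fin n → R) v with hb
  have hab : a * b = vecMulVec s v := by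
    rw [ha, hb, vmv_mul, single_dotProduct, one_mul, Pi.single_eq_same, one_smul]
  have hba : b * a = 0 := by rw [hb, ha, vmv_mul, h, zero_smul]
  have haa : a * a = 0 := by rw [ha, vmv_mul, single_dotProduct, one_mul, hs, zero_smul]
  have hbb : b * b = 0 := by rw [hb, vmv_mul, dotProduct_single, mul_one, hv, zero_smul]
  have key : unitAdd s v h * B * A = A * B := by
    refine Units.ext ?_
    simp only [Units.val_mul, unitAdd_val, hA, hB, ← ha, ← hb, ← hab]
    simp only [mul_add, add_mul, mul_one, one_mul, hba, hbb, mul_assoc, haa]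
    simp only [← mul_assoc, hba, hbb, zero_mul, mul_zero, add_zero]
    abel
  have : unitAdd s v h = A * B * A⁻¹ * B⁻¹ := by
    rw [← key]; group
  rw [this]
  have hAmem : A ∈ elemGroup R n := col_mem k s hs h1
  have hBmem : B ∈ elemGroup R n := row_mem k 1 v hv h2
  exact mul_mem (mul_mem (mul_mem hAmem hBmem) (inv_mem hAmem)) (inv_mem hBmem)

/-- The Suslin vector `λ (u_l e_m - u_m e_l)`. -/
def suslinVec (lam : R) (u : Fin n → R) (l m : Fin n) : Fin n → R :=
  lam • (u l • (Pi.single m (1:R) : Fin n → R) - u m • (Pi.single l (1:R) : Fin n → R))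

/-- dot product of the Suslin vector with anything. -/
lemma suslin_dot (lam : R) (u z : Fin n → R) (l m : Fin n) :
    suslinVec lam u l m ⬝ᵥ z = lam * (u l * z m - u m * z l) := by
  unfold suslinVec
  simp only [smul_dotProduct, sub_dotProduct, single_dotProduct,
    smul_eq_mul, one_mul]

/-- Suslin's lemma: `1 + λ u (u_l e_mᵀ - u_m e_lᵀ) ∈ E(n,R)` for `n ≥ 3`. -/
lemma suslin_mem (hn : 3 ≤ n) (lam : R) (u : Fin n → R) (l m : Fin n) (hlm : l ≠ m) (h) :
    unitAdd u (suslinVec lam u l m) h ∈ elemGroup R n := by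
  -- find k distinct from l and m
  obtain ⟨k, hkl, hkm⟩ : ∃ k : Fin n, k ≠ l ∧ k ≠ m := by
    by_contra hc
    push_neg at hc
    have hsub : (Finset.univ : Finset (Fin n)) ⊆ {l, m} := by
      intro k _
      rcases eq_or_ne k l with rfl | hkl
      · simp
      · simp [hc k hkl]
    have := Finset.card_le_card hsub
    simp only [Finset.card_univ, Fintype.card_fin] at this
    have h2 : ({l, m} : Finset (Fin n)).card ≤ 2 :=
      (Finset.card_insert_le _ _).trans (by simp)
    omega
  set v : Fin n → R := suslinVec lam u l m with hvdef
  have hvk : v k = 0 := by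
    simp [hvdef, suslinVec, Pi.single_apply, hkl, hkm]
  set t : Fin n → R := Pi.single k (u k) with htdef
  set s : Fin n → R := u - t with hsdef
  have hvu : v ⬝ᵥ u = 0 := by rw [hvdef, suslin_dot]; ring
  have hvt : v ⬝ᵥ t = 0 := by
    rw [htdef, dotProduct_single, hvk, zero_mul]
  have hvs : v ⬝ᵥ s = 0 := by
    rw [hsdef, dotProduct_sub, hvu, hvt, sub_zero]
  have hsk : s k = 0 := by simp [hsdef, htdef]
  have hsum : u = s + t := by rw [hsdef]; ring
  have e2 : unitAdd u v h = unitAdd (s + t) v (by rw [← hsum]; exact h) :=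
    unitAdd_congr _ _ (by rw [hsum])
  rw [e2, ← unitAdd_mul_left s t v hvs hvt _]
  exact mul_mem (comm_mem k s v hsk hvk hvs) (row_mem k (u k) v hvk hvt)

lemma finsum_dot {ι : Type*} (F : ι → (Fin n → R)) (T : Finset ι) (u : Fin n → R) :
    (∑ p ∈ T, F p) ⬝ᵥ u = ∑ p ∈ T, F p ⬝ᵥ u := by
  simp only [dotProduct, Finset.sum_apply, Finset.sum_mul]
  rw [Finset.sum_comm]

lemma sum_right_mem {ι : Type*} [DecidableEq ι] (u : Fin n → R) (F : ι → (Fin n → R)) (T : Finset ι)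
    (h0 : ∀ p ∈ T, F p ⬝ᵥ u = 0)
    (hm : ∀ p ∈ T, ∀ h, unitAdd u (F p) h ∈ elemGroup R n) :
    ∀ h, unitAdd u (∑ p ∈ T, F p) h ∈ elemGroup R n := by
  induction T using Finset.induction_on with
  | empty =>
    intro h
    have : (∑ p ∈ (∅ : Finset ι), F p) = 0 := Finset.sum_empty
    rw [unitAdd_congr h (by simp [this, dotProduct] : (0 : Fin n → R) ⬝ᵥ u = 0)
      (by rw [this]), unitAdd_zero_right]
    exact one_mem _
  | @insert a T ha ih =>
    intro h
    have hS : (∑ p ∈ T, F p) ⬝ᵥ u = 0 := by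
      rw [finsum_dot]
      exact Finset.sum_eq_zero fun p hp => h0 p (Finset.mem_insert_of_mem hp)
    have ha0 : F a ⬝ᵥ u = 0 := h0 a (Finset.mem_insert_self a T)
    have hsum : (∑ p ∈ Insert.insert a T, F p) = F a + ∑ p ∈ T, F p :=
      Finset.sum_insert ha
    have h' : (F a + ∑ p ∈ T, F p) ⬝ᵥ u = 0 := by rw [← hsum]; exact h
    rw [unitAdd_congr h h' (by rw [hsum]), ← unitAdd_mul_right u _ _ ha0 hS h']
    exact mul_mem (hm a (Finset.mem_insert_self a T) ha0)
      (ih (fun p hp => h0 p (Finset.mem_insert_of_mem hp))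
        (fun p hp => hm p (Finset.mem_insert_of_mem hp)) hS)

lemma mat_mul_vmv (A : Matrix (Fin n) (Fin n) R) (p q : Fin n → R) :
    A * vecMulVec p q = vecMulVec (A *ᵥ p) q := by
  ext a b
  simp only [Matrix.mul_apply, vecMulVec_apply, Matrix.mulVec, dotProduct, Finset.sum_mul]
  exact Finset.sum_congr rfl fun k _ => by ring

lemma vmv_mul_mat (B : Matrix (Fin n) (Fin n) R) (p q : Fin n → R) :
    vecMulVec p q * B = vecMulVec p (q ᵥ* B) := by
  ext a b
  simp only [Matrix.mul_apply, vecMulVec_apply, Matrix.vecMul, dotProduct, Finset.mul_sum]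
  exact Finset.sum_congr rfl fun k _ => by ring

/-- a conjugate of an elementary generator lies in `E(n,R)`. -/
lemma conj_gen_mem (hn : 3 ≤ n) (x : GL (Fin n) R) (i j : Fin n) (ξ : R) (hij : i ≠ j)
    (s : GL (Fin n) R) (hs : (s : Matrix (Fin n) (Fin n) R) = 1 + Matrix.single i j ξ) :
    x * s * x⁻¹ ∈ elemGroup R n := by
  set u : Fin n → R := fun a => (x : Matrix (Fin n) (Fin n) R) a i with hu
  set w : Fin n → R := fun b => ((x⁻¹ : GL (Fin n) R) : Matrix (Fin n) (Fin n) R) j b with hw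
  set c : Fin n → R := fun b => ((x⁻¹ : GL (Fin n) R) : Matrix (Fin n) (Fin n) R) i b with hc
  have hinvmul : ((x⁻¹ : GL (Fin n) R) : Matrix (Fin n) (Fin n) R)
      * (x : Matrix (Fin n) (Fin n) R) = 1 := by
    rw [← Units.val_mul, inv_mul_cancel, Units.val_one]
  have hwu : w ⬝ᵥ u = 0 := by
    have : w ⬝ᵥ u = (((x⁻¹ : GL (Fin n) R) : Matrix (Fin n) (Fin n) R)
        * (x : Matrix (Fin n) (Fin n) R)) j i := by
      rw [Matrix.mul_apply]; rfl
    rw [this, hinvmul, Matrix.one_apply_ne (Ne.symm hij)]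
  have hcu : c ⬝ᵥ u = 1 := by
    have : c ⬝ᵥ u = (((x⁻¹ : GL (Fin n) R) : Matrix (Fin n) (Fin n) R)
        * (x : Matrix (Fin n) (Fin n) R)) i i := by
      rw [Matrix.mul_apply]; rfl
    rw [this, hinvmul, Matrix.one_apply_eq]
  have hdot : (ξ • w) ⬝ᵥ u = 0 := by rw [smul_dotProduct, hwu, smul_zero]
  have hval : x * s * x⁻¹ = unitAdd u (ξ • w) hdot := by
    refine Units.ext ?_
    rw [Units.val_mul, Units.val_mul, hs, unitAdd_val]
    rw [mul_add, add_mul, mul_one]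
    rw [show ((x : Matrix (Fin n) (Fin n) R) * ((x⁻¹ : GL (Fin n) R) : Matrix (Fin n) (Fin n) R))
      = 1 by rw [← Units.val_mul, mul_inv_cancel, Units.val_one]]
    congr 1
    rw [← vmv_single_single i j ξ, mat_mul_vmv, vmv_mul_mat]
    ext a b
    simp only [vecMulVec_apply, Matrix.mulVec_single, Matrix.single_vecMul, one_mul,
      Pi.smul_apply, smul_eq_mul, hu, hw, op_smul_eq_mul, Matrix.col_apply, Matrix.row_apply]
    ring
  rw [hval]
  set F : Fin n × Fin n → (Fin n → R) :=
    fun p => suslinVec (ξ * c p.1 * w p.2) u p.1 p.2 with hF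
  have hdecomp : (ξ • w : Fin n → R) = ∑ p : Fin n × Fin n, F p := by
    funext b
    simp only [hF, suslinVec, Fintype.sum_prod_type, Finset.sum_apply, Pi.smul_apply,
      Pi.sub_apply, Pi.single_apply, smul_eq_mul]
    have key : ∀ l m : Fin n,
        ξ * c l * w m * (u l * (if b = m then 1 else 0) - u m * (if b = l then 1 else 0))
        = (if b = m then ξ * c l * u l * w m else 0)
          - (if b = l then ξ * c l * (w m * u m) else 0) := by
      intro l m; split_ifs <;> ring
    simp only [key, Finset.sum_sub_distrib, Finset.sum_ite_eq, Finset.mem_univ, if_true,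
      Finset.sum_ite_irrel, Finset.sum_const_zero, ← Finset.mul_sum]
    have hwu' : (∑ m : Fin n, w m * u m) = 0 := hwu
    have hcu' : (∑ l : Fin n, c l * u l) = 1 := hcu
    rw [hwu']
    simp only [mul_zero, Finset.sum_ite_eq, Finset.mem_univ, if_true, sub_zero]
    have h3 : (∑ l : Fin n, ξ * c l * u l * w b) = (ξ * ∑ l : Fin n, c l * u l) * w b := by
      rw [Finset.mul_sum, Finset.sum_mul]
      exact Finset.sum_congr rfl fun l _ => by ring
    rw [h3, hcu', mul_one]
  have hdot' : (∑ p : Fin n × Fin n, F p) ⬝ᵥ u = 0 := by rw [← hdecomp]; exact hdot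
  rw [unitAdd_congr hdot hdot' (by rw [hdecomp])]
  refine sum_right_mem u F Finset.univ ?_ ?_ hdot'
  · intro p _
    rw [hF]
    rw [suslin_dot]
    ring
  · intro p _ h
    rcases eq_or_ne p.1 p.2 with he | hne
    · have hz : F p = 0 := by
        rw [hF]
        simp only [suslinVec, he, sub_self, smul_zero]
      have h0 : (0 : Fin n → R) ⬝ᵥ u = 0 := by simp [dotProduct]
      rw [unitAdd_congr h h0 (by rw [hz]), unitAdd_zero_right]
      exact one_mem _
    · exact suslin_mem hn _ u p.1 p.2 hne h

/-- normality of the elementary group. -/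
lemma conj_mem (hn : 3 ≤ n) (x : GL (Fin n) R) {g : GL (Fin n) R}
    (hg : g ∈ elemGroup R n) : x * g * x⁻¹ ∈ elemGroup R n := by
  have hmap : (elemGroup R n).map (MulAut.conj x).toMonoidHom ≤ elemGroup R n := by
    rw [elemGroup, MonoidHom.map_closure]
    refine (Subgroup.closure_le _).mpr ?_
    rintro y ⟨s, ⟨i, j, ξ, hij, hs⟩, rfl⟩
    exact conj_gen_mem hn x i j ξ hij s hs
  exact hmap ⟨g, hg, rfl⟩

lemma lo_lt_hi (K : V n) : lo K < hi K :=
  Finset.min'_lt_max'_of_card _ (by rw [K.2]; norm_num)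

lemma coe_eq_pair (K : V n) : K.1 = {lo K, hi K} := by
  refine (Finset.eq_of_subset_of_card_le ?_ ?_).symm
  · intro a ha
    simp only [Finset.mem_insert, Finset.mem_singleton] at ha
    rcases ha with rfl | rfl
    · exact Finset.min'_mem _ _
    · exact Finset.max'_mem _ _
  · rw [K.2, Finset.card_pair (lo_lt_hi K).ne]

lemma lo_pair (k l : Fin n) (hkl : k < l) (h : ({k, l} : Finset (Fin n)).card = 2) :
    lo ⟨{k, l}, h⟩ = k := by
  refine le_antisymm (Finset.min'_le _ _ (by simp)) (Finset.le_min' _ _ _ ?_)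
  intro y hy
  simp only [Finset.mem_insert, Finset.mem_singleton] at hy
  rcases hy with rfl | rfl
  · exact le_refl _
  · exact hkl.le

lemma hi_pair (k l : Fin n) (hkl : k < l) (h : ({k, l} : Finset (Fin n)).card = 2) :
    hi ⟨{k, l}, h⟩ = l := by
  refine le_antisymm (Finset.max'_le _ _ _ ?_) (Finset.le_max' _ _ (by simp))
  intro y hy
  simp only [Finset.mem_insert, Finset.mem_singleton] at hy
  rcases hy with rfl | rfl
  · exact hkl.le
  · exact le_refl _

/-- sum over ordered pairs equals sum over 2-element subsets. -/
lemma pair_sum {M : Type*} [AddCommMonoid M] (f : Fin n → Fin n → M) :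
    ∑ p ∈ Finset.univ.filter (fun p : Fin n × Fin n => p.1 < p.2), f p.1 p.2
      = ∑ K : V n, f (lo K) (hi K) := by
  refine Finset.sum_bij'
    (fun p hp => (⟨{p.1, p.2}, Finset.card_pair
      (ne_of_lt (Finset.mem_filter.mp hp).2)⟩ : V n))
    (fun K _ => (lo K, hi K)) ?_ ?_ ?_ ?_ ?_
  · intro a ha; exact Finset.mem_univ _
  · intro K _
    simp only [Finset.mem_filter, Finset.mem_univ, true_and]
    exact lo_lt_hi K
  · intro p hp
    have h := (Finset.mem_filter.mp hp).2
    simp only [lo_pair _ _ h, hi_pair _ _ h]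
  · intro K _
    exact Subtype.ext (coe_eq_pair K).symm
  · intro p hp
    have h := (Finset.mem_filter.mp hp).2
    rw [lo_pair _ _ h, hi_pair _ _ h]

/-- split a full double sum with zero diagonal into ordered pairs. -/
lemma sum_split (g : Fin n × Fin n → R) (hdiag : ∀ k, g (k, k) = 0) :
    ∑ p : Fin n × Fin n, g p
      = ∑ p ∈ Finset.univ.filter (fun p : Fin n × Fin n => p.1 < p.2), (g p + g p.swap) := by
  rw [Finset.sum_add_distrib]
  have h1 : ∑ p ∈ Finset.univ.filter (fun p : Fin n × Fin n => p.1 < p.2), g p.swap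
      = ∑ p ∈ Finset.univ.filter (fun p : Fin n × Fin n => p.2 < p.1), g p := by
    refine Finset.sum_equiv (Equiv.prodComm (Fin n) (Fin n)) ?_ ?_
    · intro p; simp [Equiv.prodComm]
    · intro p _; rfl
  rw [h1]
  rw [← Finset.sum_filter_add_sum_filter_not Finset.univ
    (fun p : Fin n × Fin n => p.1 < p.2) g]
  congr 1
  rw [← Finset.sum_filter_add_sum_filter_not
    (Finset.univ.filter (fun p : Fin n × Fin n => ¬ p.1 < p.2))
    (fun p : Fin n × Fin n => p.2 < p.1) g]
  have h2 : (Finset.univ.filter (fun p : Fin n × Fin n => ¬ p.1 < p.2)).filter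
      (fun p : Fin n × Fin n => p.2 < p.1)
      = Finset.univ.filter (fun p : Fin n × Fin n => p.2 < p.1) := by
    rw [Finset.filter_filter]
    apply Finset.filter_congr
    intro p _
    constructor
    · exact fun h => h.2
    · exact fun h => ⟨not_lt_of_gt h, h⟩
  have h3 : ∑ p ∈ (Finset.univ.filter (fun p : Fin n × Fin n => ¬ p.1 < p.2)).filter
      (fun p : Fin n × Fin n => ¬ p.2 < p.1), g p = 0 := by
    refine Finset.sum_eq_zero fun p hp => ?_
    simp only [Finset.mem_filter] at hp
    have : p.1 = p.2 := le_antisymm (not_lt.mp hp.2) (not_lt.mp hp.1.2)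
    have hp2 : p = (p.1, p.1) := by rw [Prod.ext_iff]; exact ⟨rfl, this.symm⟩
    rw [hp2, hdiag]
  rw [h2, h3, add_zero]

/-- Cauchy–Binet for 2×2 minors: the exterior square is multiplicative. -/
lemma wedge_mul (x y : Matrix (Fin n) (Fin n) R) :
    wedge (x * y) = wedge x * wedge y := by
  ext I J
  set a := lo I; set b := hi I; set c := lo J; set d := hi J
  set g : Fin n × Fin n → R :=
    fun p => x a p.1 * x b p.2 * (y p.1 c * y p.2 d - y p.1 d * y p.2 c) with hg
  have step1 : wedge (x * y) I J = ∑ p : Fin n × Fin n, g p := by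
    show (x * y) a c * (x * y) b d - (x * y) a d * (x * y) b c = _
    simp only [Matrix.mul_apply]
    rw [Finset.sum_mul_sum, Finset.sum_mul_sum, ← Finset.sum_sub_distrib,
      Fintype.sum_prod_type]
    refine Finset.sum_congr rfl fun k _ => ?_
    rw [← Finset.sum_sub_distrib]
    refine Finset.sum_congr rfl fun l _ => ?_
    simp only [hg]; ring
  have hdiag : ∀ k, g (k, k) = 0 := fun k => by simp only [hg]; ring
  rw [step1, sum_split g hdiag]
  have step3 : ∑ p ∈ Finset.univ.filter (fun p : Fin n × Fin n => p.1 < p.2),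
      (g p + g p.swap) = ∑ K : V n, (g (lo K, hi K) + g (hi K, lo K)) :=
    pair_sum (fun k l => g (k, l) + g (l, k))
  rw [step3]
  show _ = ∑ K : V n, wedge x I K * wedge y K J
  refine Finset.sum_congr rfl fun K _ => ?_
  show g (lo K, hi K) + g (hi K, lo K)
      = (x a (lo K) * x b (hi K) - x a (hi K) * x b (lo K))
        * (y (lo K) c * y (hi K) d - y (lo K) d * y (hi K) c)
  simp only [hg]; ring

end S3

/-- `∧²(E(n,R)) ⊴ ∧²(GL_n(R))`: conjugating the image of any element of the
elementary group `E(n,R)` under the exterior square homomorphism by the image of any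
element of `GL_n(R)` lands again in the image of `E(n,R)`. -/
theorem stmt3 (R : Type*) [CommRing R] (n : ℕ) (hn : 3 ≤ n) :
    ∀ x : Matrix.GeneralLinearGroup (Fin n) R, ∀ e ∈ elemGroup R n,
      ∃ e' ∈ elemGroup R n,
        wedge (x : Matrix (Fin n) (Fin n) R) * wedge (e : Matrix (Fin n) (Fin n) R) *
            wedge ((x⁻¹ : Matrix.GeneralLinearGroup (Fin n) R) : Matrix (Fin n) (Fin n) R) =
          wedge (e' : Matrix (Fin n) (Fin n) R) := by
  intro x e he
  refine ⟨x * e * x⁻¹, S3.conj_mem hn x he, ?_⟩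
  have h1 : ((x * e * x⁻¹ : Matrix.GeneralLinearGroup (Fin n) R) : Matrix (Fin n) (Fin n) R)
      = (x : Matrix (Fin n) (Fin n) R) * (e : Matrix (Fin n) (Fin n) R)
        * ((x⁻¹ : Matrix.GeneralLinearGroup (Fin n) R) : Matrix (Fin n) (Fin n) R) := by
    rw [Units.val_mul, Units.val_mul]
  rw [h1, S3.wedge_mul, S3.wedge_mul]
end

section
/- Let R be a commutative ring, n ≥ 3, and 1 ≤ i < j ≤ n, ξ ∈ R. Then in GL_N(R) (rows and columns indexed by 2-element subsets of [n]) the exterior square of an elementary transvection decomposes as the product ∧²t_{i,j}(ξ) = ∏_{k=1}^{i−1} t_{{k,i},{k,j}}(ξ) · ∏_{l=i+1}^{j−1} t_{{i,l},{l,j}}(−ξ) · ∏_{m=j+1}^{n} t_{{i,m},{j,m}}(ξ) of elementary transvections of GL_N(R). -/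
open Finset MvPolynomial Matrix

section Aux
variable {R : Type*} [CommRing R] {n : ℕ}

lemma pair_card {a b : Fin n} (h : a ≠ b) : ({a, b} : Finset (Fin n)).card = 2 := by
  rw [Finset.card_insert_of_notMem (by simp [h]), Finset.card_singleton]

lemma pair_eq_pair {a b c d : Fin n} (hab : a < b) (hcd : c < d) :
    ({a, b} : Finset (Fin n)) = {c, d} ↔ a = c ∧ b = d := by
  constructor
  · intro h
    have h1 : a = c ∨ a = d := by
      have := (Finset.ext_iff.mp h a).mp (by simp); simpa using this
    have h2 : c = a ∨ c = b := by
      have := (Finset.ext_iff.mp h c).mpr (by simp); simpa using this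
    have h3 : d = a ∨ d = b := by
      have := (Finset.ext_iff.mp h d).mpr (by simp); simpa using this
    rcases h1 with rfl | rfl
    · rcases h3 with rfl | rfl
      · exact absurd hcd (lt_irrefl _)
      · exact ⟨rfl, rfl⟩
    · rcases h2 with rfl | rfl
      · exact absurd hcd (lt_irrefl _)
      · exact absurd (hab.trans hcd) (lt_irrefl _)
  · rintro ⟨rfl, rfl⟩; rfl

lemma lo_lt_hi (I : V n) : lo I < hi I := by
  apply Finset.min'_lt_max'_of_card
  rw [I.2]; norm_num

lemma eq_pair (I : V n) : I.1 = {lo I, hi I} := by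
  symm
  apply Finset.eq_of_subset_of_card_le
  · intro x hx
    simp only [Finset.mem_insert, Finset.mem_singleton] at hx
    rcases hx with rfl | rfl
    exacts [Finset.min'_mem _ _, Finset.max'_mem _ _]
  · rw [I.2, pair_card (lo_lt_hi I).ne]

lemma transvN_eq {S T : Finset (Fin n)} (h1 : S.card = 2) (h2 : T.card = 2)
    (hne : S ≠ T) (ξ : R) :
    transvN R n S T ξ = 1 + Matrix.single (⟨S, h1⟩ : V n) ⟨T, h2⟩ ξ := by
  rw [transvN, dif_pos ⟨h1, h2, hne⟩]

lemma list_sum_apply {α m : Type*} (L : List α) (f : α → Matrix m m R) (I J : m) :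
    (L.map f).sum I J = (L.map fun a => f a I J).sum := by
  induction L with
  | nil => simp
  | cons a L ih => simp [Matrix.add_apply, ih]

lemma mul_list_sum_zero {m : Type*} [Fintype m] (M : Matrix m m R)
    (L : List (Matrix m m R)) (h : ∀ N ∈ L, M * N = 0) : M * L.sum = 0 := by
  induction L with
  | nil => simp
  | cons a L ih =>
    rw [List.sum_cons, mul_add, h a (by simp),
      ih (fun N hN => h N (by simp [hN])), add_zero]

lemma list_sum_mul_zero {m : Type*} [Fintype m] (L1 L2 : List (Matrix m m R))
    (h : ∀ M ∈ L1, ∀ N ∈ L2, M * N = 0) : L1.sum * L2.sum = 0 := by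
  induction L1 with
  | nil => simp
  | cons a L ih =>
    rw [List.sum_cons, add_mul, mul_list_sum_zero _ _ (h a (by simp)),
      ih (fun M hM N hN => h M (by simp [hM]) N hN), zero_add]

lemma prod_one_add {m : Type*} [Fintype m] [DecidableEq m] {α : Type*} (L : List α)
    (S T : α → m) (c : α → R)
    (h : ∀ a ∈ L, ∀ b ∈ L, T a ≠ S b) :
    (L.map fun a => (1 : Matrix m m R) + Matrix.single (S a) (T a) (c a)).prod
      = 1 + (L.map fun a => Matrix.single (S a) (T a) (c a)).sum := by
  induction L with
  | nil => simp
  | cons a L ih =>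
    rw [List.map_cons, List.prod_cons, List.map_cons, List.sum_cons,
      ih (fun x hx y hy => h x (by simp [hx]) y (by simp [hy]))]
    have h0 : Matrix.single (S a) (T a) (c a) *
        (L.map fun b => Matrix.single (S b) (T b) (c b)).sum = 0 := by
      apply mul_list_sum_zero
      intro N hN
      simp only [List.mem_map] at hN
      obtain ⟨b, hb, rfl⟩ := hN
      exact Matrix.single_mul_single_of_ne _ _ _ _ (h a (by simp) b (by simp [hb])) _
    rw [add_mul, one_mul, mul_add, mul_one, h0, add_zero]
    abel

lemma filter_map_sum {α M : Type*} [AddCommMonoid M] (p : α → Bool) (F : α → M)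
    (l : List α) :
    ((l.filter p).map F).sum = (l.map fun a => if p a then F a else 0).sum := by
  induction l with
  | nil => simp
  | cons a l ih => by_cases h : p a <;> simp [List.filter_cons, h, ih]

end Aux

lemma sum_ite_point {M : Type*} [AddCommMonoid M] {n : ℕ} (a : Fin n)
    (P : Fin n → Prop) [DecidablePred P] (Q : Prop) [Decidable Q] (v : M)
    (h : ∀ k, P k ↔ k = a ∧ Q) :
    (∑ k : Fin n, if P k then v else 0) = if Q then v else 0 := by
  have e : ∀ k : Fin n, (if P k then v else 0)
      = if k = a then (if Q then v else 0) else 0 := by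
    intro k; rw [if_congr (h k) rfl rfl, ite_and]
  rw [Finset.sum_congr rfl (fun k _ => e k),
    Finset.sum_ite_eq' Finset.univ a (fun _ => if Q then v else 0),
    if_pos (Finset.mem_univ a)]

lemma one_add_mul₃ {R : Type*} [CommRing R] {m : Type*} [Fintype m] [DecidableEq m]
    (A B C : Matrix m m R) (hAB : A * B = 0) (hAC : A * C = 0) (hBC : B * C = 0) :
    (1 + A) * (1 + B) * (1 + C) = 1 + (A + B + C) := by
  have h1 : (1 + A) * (1 + B) = 1 + (A + B) := by
    rw [mul_add, mul_one, add_mul, one_mul, hAB, add_zero, add_assoc]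
  rw [h1, mul_add, mul_one, add_mul, one_mul, add_mul, hAC, hBC, add_zero, add_zero]
  abel


set_option maxHeartbeats 1000000 in
lemma final_ident {R : Type*} [CommRing R] (ξ : R) (a b c d i j : ℕ)
    (hab : a < b) (hcd : c < d) (hij : i < j) :
    ((if a = c then (1:R) else 0) + if i = a ∧ j = c then ξ else 0) *
    ((if b = d then 1 else 0) + if i = b ∧ j = d then ξ else 0) -
    ((if a = d then 1 else 0) + if i = a ∧ j = d then ξ else 0) *
    ((if b = c then 1 else 0) + if i = b ∧ j = c then ξ else 0)
    = (if a = c ∧ b = d then 1 else 0) +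
      (((if a < i ∧ b = i ∧ c = a ∧ d = j then ξ else 0) +
        if a = i ∧ i < b ∧ b < j ∧ c = b ∧ d = j then -ξ else 0) +
       if a = i ∧ j < b ∧ c = j ∧ d = b then ξ else 0) := by
  by_cases h1 : i = a
  · subst h1
    have h2 : ¬ i = b := hab.ne
    simp only [h2, lt_irrefl, false_and, and_false, if_false, eq_self_iff_true, true_and]
    split_ifs <;> first | omega | ring
  · have h1' : ¬ a = i := fun h => h1 h.symm
    simp only [h1, h1', false_and, and_false, if_false]
    by_cases h2 : i = b
    · subst h2
      simp only [eq_self_iff_true, true_and]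
      split_ifs <;> first | omega | ring
    · have h2' : ¬ b = i := fun h => h2 h.symm
      simp only [h2, h2', false_and, and_false, if_false]
      split_ifs <;> first | omega | ring


/-- for `i < j`, the exterior square of an elementary transvection decomposes
as `∧²t_{i,j}(ξ) = ∏_{k<i} t_{{k,i},{k,j}}(ξ) · ∏_{i<l<j} t_{{i,l},{l,j}}(−ξ) ·
∏_{j<m} t_{{i,m},{j,m}}(ξ)`. -/
theorem stmt4 (R : Type*) [CommRing R] (n : ℕ) (hn : 3 ≤ n)
    (i j : Fin n) (hij : i < j) (ξ : R) :
    wedge (1 + Matrix.single i j ξ) =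
      (((List.finRange n).filter (fun k => decide (k < i))).map
          (fun k => transvN R n {k, i} {k, j} ξ)).prod *
      (((List.finRange n).filter (fun l => decide (i < l ∧ l < j))).map
          (fun l => transvN R n {i, l} {l, j} (-ξ))).prod *
      (((List.finRange n).filter (fun m => decide (j < m))).map
          (fun m => transvN R n {i, m} {j, m} ξ)).prod := by
  classical
  set L1 := (List.finRange n).filter (fun k => decide (k < i)) with hL1
  set L2 := (List.finRange n).filter (fun l => decide (i < l ∧ l < j)) with hL2
  set L3 := (List.finRange n).filter (fun m => decide (j < m)) with hL3
  have m1 : ∀ k ∈ L1, k < i := fun k hk => by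
    have := (List.mem_filter.mp hk).2; simpa using this
  have m2 : ∀ l ∈ L2, i < l ∧ l < j := fun l hl => by
    have := (List.mem_filter.mp hl).2; simpa using this
  have m3 : ∀ m ∈ L3, j < m := fun m hm => by
    have := (List.mem_filter.mp hm).2; simpa using this
  -- rewrite the three lists of transvections as 1 + stdBasisMatrix
  have e1 : L1.map (fun k => transvN R n {k, i} {k, j} ξ)
      = L1.attach.map (fun k => (1 : Matrix (V n) (V n) R) +
          Matrix.single (⟨{k.1, i}, pair_card (m1 k.1 k.2).ne⟩ : V n)
            (⟨{k.1, j}, pair_card ((m1 k.1 k.2).trans hij).ne⟩ : V n) ξ) := by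
    conv_lhs => rw [← List.attach_map_val (l := L1) (f := fun k => transvN R n {k, i} {k, j} ξ)]
    exact List.map_congr_left fun k _ => transvN_eq _ _
      (fun h => hij.ne (((pair_eq_pair (m1 k.1 k.2) ((m1 k.1 k.2).trans hij)).mp h).2)) ξ
  have e2 : L2.map (fun l => transvN R n {i, l} {l, j} (-ξ))
      = L2.attach.map (fun l => (1 : Matrix (V n) (V n) R) +
          Matrix.single (⟨{i, l.1}, pair_card (m2 l.1 l.2).1.ne⟩ : V n)
            (⟨{l.1, j}, pair_card (m2 l.1 l.2).2.ne⟩ : V n) (-ξ)) := by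
    conv_lhs => rw [← List.attach_map_val (l := L2) (f := fun l => transvN R n {i, l} {l, j} (-ξ))]
    refine List.map_congr_left fun l _ => transvN_eq _ _ (fun h => ?_) (-ξ)
    exact (m2 l.1 l.2).1.ne (((pair_eq_pair (m2 l.1 l.2).1 (m2 l.1 l.2).2).mp h).1)
  have e3 : L3.map (fun m => transvN R n {i, m} {j, m} ξ)
      = L3.attach.map (fun m => (1 : Matrix (V n) (V n) R) +
          Matrix.single (⟨{i, m.1}, pair_card (hij.trans (m3 m.1 m.2)).ne⟩ : V n)
            (⟨{j, m.1}, pair_card (m3 m.1 m.2).ne⟩ : V n) ξ) := by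
    conv_lhs => rw [← List.attach_map_val (l := L3) (f := fun m => transvN R n {i, m} {j, m} ξ)]
    refine List.map_congr_left fun m _ => transvN_eq _ _ (fun h => ?_) ξ
    exact hij.ne (((pair_eq_pair (hij.trans (m3 m.1 m.2)) (m3 m.1 m.2)).mp h).1)
  -- expand the three products
  have p1 := prod_one_add (R := R) L1.attach
    (fun k => (⟨{k.1, i}, pair_card (m1 k.1 k.2).ne⟩ : V n))
    (fun k => ((⟨{k.1, j}, pair_card ((m1 k.1 k.2).trans hij).ne⟩ : V n) : V n))
    (fun _ => ξ) (by
      intro a _ b _ h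
      exact hij.ne' (((pair_eq_pair ((m1 a.1 a.2).trans hij) (m1 b.1 b.2)).mp
        (Subtype.ext_iff.mp h)).2))
  have p2 := prod_one_add (R := R) L2.attach
    (fun l => (⟨{i, l.1}, pair_card (m2 l.1 l.2).1.ne⟩ : V n))
    (fun l => ((⟨{l.1, j}, pair_card (m2 l.1 l.2).2.ne⟩ : V n) : V n))
    (fun _ => -ξ) (by
      intro a _ b _ h
      exact (m2 a.1 a.2).1.ne' (((pair_eq_pair (m2 a.1 a.2).2 (m2 b.1 b.2).1).mp
        (Subtype.ext_iff.mp h)).1))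
  have p3 := prod_one_add (R := R) L3.attach
    (fun m => (⟨{i, m.1}, pair_card (hij.trans (m3 m.1 m.2)).ne⟩ : V n))
    (fun m => ((⟨{j, m.1}, pair_card (m3 m.1 m.2).ne⟩ : V n) : V n))
    (fun _ => ξ) (by
      intro a _ b _ h
      exact hij.ne' (((pair_eq_pair (m3 a.1 a.2) (hij.trans (m3 b.1 b.2))).mp
        (Subtype.ext_iff.mp h)).1))
  -- cross products vanish
  have hAB : (L1.attach.map (fun k =>
        Matrix.single (⟨{k.1, i}, pair_card (m1 k.1 k.2).ne⟩ : V n)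
          (⟨{k.1, j}, pair_card ((m1 k.1 k.2).trans hij).ne⟩ : V n) ξ)).sum *
      (L2.attach.map (fun l =>
        Matrix.single (⟨{i, l.1}, pair_card (m2 l.1 l.2).1.ne⟩ : V n)
          (⟨{l.1, j}, pair_card (m2 l.1 l.2).2.ne⟩ : V n) (-ξ))).sum = 0 := by
    apply list_sum_mul_zero
    intro M hM N hN
    simp only [List.mem_map] at hM hN
    obtain ⟨a, _, rfl⟩ := hM
    obtain ⟨b, _, rfl⟩ := hN
    refine Matrix.single_mul_single_of_ne _ _ _ _ (fun h => ?_) _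
    exact (m1 a.1 a.2).ne (((pair_eq_pair ((m1 a.1 a.2).trans hij) (m2 b.1 b.2).1).mp
      (Subtype.ext_iff.mp h)).1)
  have hAC : (L1.attach.map (fun k =>
        Matrix.single (⟨{k.1, i}, pair_card (m1 k.1 k.2).ne⟩ : V n)
          (⟨{k.1, j}, pair_card ((m1 k.1 k.2).trans hij).ne⟩ : V n) ξ)).sum *
      (L3.attach.map (fun m =>
        Matrix.single (⟨{i, m.1}, pair_card (hij.trans (m3 m.1 m.2)).ne⟩ : V n)
          (⟨{j, m.1}, pair_card (m3 m.1 m.2).ne⟩ : V n) ξ)).sum = 0 := by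
    apply list_sum_mul_zero
    intro M hM N hN
    simp only [List.mem_map] at hM hN
    obtain ⟨a, _, rfl⟩ := hM
    obtain ⟨b, _, rfl⟩ := hN
    refine Matrix.single_mul_single_of_ne _ _ _ _ (fun h => ?_) _
    exact (m1 a.1 a.2).ne (((pair_eq_pair ((m1 a.1 a.2).trans hij)
      (hij.trans (m3 b.1 b.2))).mp (Subtype.ext_iff.mp h)).1)
  have hBC : (L2.attach.map (fun l =>
        Matrix.single (⟨{i, l.1}, pair_card (m2 l.1 l.2).1.ne⟩ : V n)
          (⟨{l.1, j}, pair_card (m2 l.1 l.2).2.ne⟩ : V n) (-ξ))).sum *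
      (L3.attach.map (fun m =>
        Matrix.single (⟨{i, m.1}, pair_card (hij.trans (m3 m.1 m.2)).ne⟩ : V n)
          (⟨{j, m.1}, pair_card (m3 m.1 m.2).ne⟩ : V n) ξ)).sum = 0 := by
    apply list_sum_mul_zero
    intro M hM N hN
    simp only [List.mem_map] at hM hN
    obtain ⟨a, _, rfl⟩ := hM
    obtain ⟨b, _, rfl⟩ := hN
    refine Matrix.single_mul_single_of_ne _ _ _ _ (fun h => ?_) _
    exact (m2 a.1 a.2).1.ne' (((pair_eq_pair (m2 a.1 a.2).2
      (hij.trans (m3 b.1 b.2))).mp (Subtype.ext_iff.mp h)).1)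
  rw [e1, e2, e3, p1, p2, p3, one_add_mul₃ _ _ _ hAB hAC hBC]
  -- now an entrywise computation
  ext I J
  simp only [Matrix.add_apply]
  have cA : (L1.attach.map (fun k =>
        Matrix.single (⟨{k.1, i}, pair_card (m1 k.1 k.2).ne⟩ : V n)
          (⟨{k.1, j}, pair_card ((m1 k.1 k.2).trans hij).ne⟩ : V n) ξ)).sum I J
      = if lo I < i ∧ hi I = i ∧ lo J = lo I ∧ hi J = j then ξ else 0 := by
    rw [list_sum_apply]
    have estep : L1.attach.map (fun k =>
          Matrix.single (⟨{k.1, i}, pair_card (m1 k.1 k.2).ne⟩ : V n)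
            (⟨{k.1, j}, pair_card ((m1 k.1 k.2).trans hij).ne⟩ : V n) ξ I J)
        = L1.attach.map (fun k => (fun x : Fin n =>
            if x < i ∧ I.1 = {x, i} ∧ J.1 = {x, j} then ξ else 0) k.1) := by
      apply List.map_congr_left
      intro k _
      have hk := m1 k.1 k.2
      simp only [Matrix.single, Matrix.of_apply]
      refine if_congr ?_ rfl rfl
      constructor
      · rintro ⟨h1, h2⟩
        exact ⟨hk, (congrArg Subtype.val h1).symm, (congrArg Subtype.val h2).symm⟩
      · rintro ⟨-, h1, h2⟩
        exact ⟨Subtype.ext h1.symm, Subtype.ext h2.symm⟩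
    rw [estep, List.attach_map_val (l := L1) (f := fun x : Fin n =>
      if x < i ∧ I.1 = {x, i} ∧ J.1 = {x, j} then ξ else 0), hL1, filter_map_sum,
      ← Fin.sum_univ_def]
    have merge : ∀ x : Fin n, (if decide (x < i) = true then
          (if x < i ∧ I.1 = {x, i} ∧ J.1 = {x, j} then ξ else 0) else 0)
        = if x < i ∧ I.1 = {x, i} ∧ J.1 = {x, j} then ξ else 0 := by
      intro x; by_cases h : x < i <;> simp [h]
    rw [Finset.sum_congr rfl (fun x _ => merge x)]
    refine sum_ite_point (lo I) _ _ ξ (fun k => ?_)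
    constructor
    · rintro ⟨hki, hI, hJ⟩
      have eI := (pair_eq_pair (lo_lt_hi I) hki).mp ((eq_pair I).symm.trans hI)
      have eJ := (pair_eq_pair (lo_lt_hi J) (hki.trans hij)).mp ((eq_pair J).symm.trans hJ)
      refine ⟨eI.1.symm, ?_, eI.2, eJ.1.trans eI.1.symm, eJ.2⟩
      rw [eI.1]; exact hki
    · rintro ⟨rfl, hQ1, hQ2, hQ3, hQ4⟩
      refine ⟨hQ1, ?_, ?_⟩
      · rw [eq_pair I, hQ2]
      · rw [eq_pair J, hQ3, hQ4]
  have cB : (L2.attach.map (fun l =>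
        Matrix.single (⟨{i, l.1}, pair_card (m2 l.1 l.2).1.ne⟩ : V n)
          (⟨{l.1, j}, pair_card (m2 l.1 l.2).2.ne⟩ : V n) (-ξ))).sum I J
      = if lo I = i ∧ i < hi I ∧ hi I < j ∧ lo J = hi I ∧ hi J = j then -ξ else 0 := by
    rw [list_sum_apply]
    have estep : L2.attach.map (fun l =>
          Matrix.single (⟨{i, l.1}, pair_card (m2 l.1 l.2).1.ne⟩ : V n)
            (⟨{l.1, j}, pair_card (m2 l.1 l.2).2.ne⟩ : V n) (-ξ) I J)
        = L2.attach.map (fun l => (fun x : Fin n =>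
            if (i < x ∧ x < j) ∧ I.1 = {i, x} ∧ J.1 = {x, j} then -ξ else 0) l.1) := by
      apply List.map_congr_left
      intro l _
      have hl := m2 l.1 l.2
      simp only [Matrix.single, Matrix.of_apply]
      refine if_congr ?_ rfl rfl
      constructor
      · rintro ⟨h1, h2⟩
        exact ⟨hl, (congrArg Subtype.val h1).symm, (congrArg Subtype.val h2).symm⟩
      · rintro ⟨-, h1, h2⟩
        exact ⟨Subtype.ext h1.symm, Subtype.ext h2.symm⟩
    rw [estep, List.attach_map_val (l := L2) (f := fun x : Fin n =>
      if (i < x ∧ x < j) ∧ I.1 = {i, x} ∧ J.1 = {x, j} then -ξ else 0), hL2, filter_map_sum,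
      ← Fin.sum_univ_def]
    have merge : ∀ x : Fin n, (if decide (i < x ∧ x < j) = true then
          (if (i < x ∧ x < j) ∧ I.1 = {i, x} ∧ J.1 = {x, j} then -ξ else 0) else 0)
        = if (i < x ∧ x < j) ∧ I.1 = {i, x} ∧ J.1 = {x, j} then -ξ else 0 := by
      intro x; by_cases h : i < x ∧ x < j <;> simp [h]
    rw [Finset.sum_congr rfl (fun x _ => merge x)]
    refine sum_ite_point (hi I) _ _ (-ξ) (fun k => ?_)
    constructor
    · rintro ⟨hk, hI, hJ⟩
      have eI := (pair_eq_pair (lo_lt_hi I) hk.1).mp ((eq_pair I).symm.trans hI)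
      have eJ := (pair_eq_pair (lo_lt_hi J) hk.2).mp ((eq_pair J).symm.trans hJ)
      refine ⟨eI.2.symm, eI.1, ?_, ?_, eJ.1.trans eI.2.symm, eJ.2⟩
      · rw [eI.2]; exact hk.1
      · rw [eI.2]; exact hk.2
    · rintro ⟨rfl, hQ1, hQ2, hQ3, hQ4, hQ5⟩
      refine ⟨⟨hQ2, hQ3⟩, ?_, ?_⟩
      · rw [eq_pair I, hQ1]
      · rw [eq_pair J, hQ4, hQ5]
  have cC : (L3.attach.map (fun m =>
        Matrix.single (⟨{i, m.1}, pair_card (hij.trans (m3 m.1 m.2)).ne⟩ : V n)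
          (⟨{j, m.1}, pair_card (m3 m.1 m.2).ne⟩ : V n) ξ)).sum I J
      = if lo I = i ∧ j < hi I ∧ lo J = j ∧ hi J = hi I then ξ else 0 := by
    rw [list_sum_apply]
    have estep : L3.attach.map (fun m =>
          Matrix.single (⟨{i, m.1}, pair_card (hij.trans (m3 m.1 m.2)).ne⟩ : V n)
            (⟨{j, m.1}, pair_card (m3 m.1 m.2).ne⟩ : V n) ξ I J)
        = L3.attach.map (fun m => (fun x : Fin n =>
            if j < x ∧ I.1 = {i, x} ∧ J.1 = {j, x} then ξ else 0) m.1) := by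
      apply List.map_congr_left
      intro m _
      have hm := m3 m.1 m.2
      simp only [Matrix.single, Matrix.of_apply]
      refine if_congr ?_ rfl rfl
      constructor
      · rintro ⟨h1, h2⟩
        exact ⟨hm, (congrArg Subtype.val h1).symm, (congrArg Subtype.val h2).symm⟩
      · rintro ⟨-, h1, h2⟩
        exact ⟨Subtype.ext h1.symm, Subtype.ext h2.symm⟩
    rw [estep, List.attach_map_val (l := L3) (f := fun x : Fin n =>
      if j < x ∧ I.1 = {i, x} ∧ J.1 = {j, x} then ξ else 0), hL3, filter_map_sum,
      ← Fin.sum_univ_def]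
    have merge : ∀ x : Fin n, (if decide (j < x) = true then
          (if j < x ∧ I.1 = {i, x} ∧ J.1 = {j, x} then ξ else 0) else 0)
        = if j < x ∧ I.1 = {i, x} ∧ J.1 = {j, x} then ξ else 0 := by
      intro x; by_cases h : j < x <;> simp [h]
    rw [Finset.sum_congr rfl (fun x _ => merge x)]
    refine sum_ite_point (hi I) _ _ ξ (fun k => ?_)
    constructor
    · rintro ⟨hk, hI, hJ⟩
      have eI := (pair_eq_pair (lo_lt_hi I) (hij.trans hk)).mp ((eq_pair I).symm.trans hI)
      have eJ := (pair_eq_pair (lo_lt_hi J) hk).mp ((eq_pair J).symm.trans hJ)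
      refine ⟨eI.2.symm, eI.1, ?_, eJ.1, eJ.2.trans eI.2.symm⟩
      rw [eI.2]; exact hk
    · rintro ⟨rfl, hQ1, hQ2, hQ3, hQ4⟩
      refine ⟨hQ2, ?_, ?_⟩
      · rw [eq_pair I, hQ1]
      · rw [eq_pair J, hQ3, hQ4]
  rw [cA, cB, cC]
  have hIJ : (I = J) ↔ (lo I = lo J ∧ hi I = hi J) := by
    rw [Subtype.ext_iff, eq_pair I, eq_pair J]
    exact pair_eq_pair (lo_lt_hi I) (lo_lt_hi J)
  simp only [wedge, Matrix.add_apply, Matrix.one_apply, Matrix.single,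
    Matrix.of_apply]
  rw [if_congr hIJ rfl rfl]
  have ha := lo_lt_hi I
  have hc := lo_lt_hi J
  simp only [Fin.lt_def, Fin.ext_iff] at ha hc hij ⊢
  exact final_ident ξ _ _ _ _ _ _ ha hc hij
end

section
/- Let R be a commutative ring, n ≥ 3, and 1 ≤ j < i ≤ n (so the transvection index pair is in the order i > j), ξ ∈ R. Then in GL_N(R) the exterior square of the elementary transvection decomposes as ∧²t_{i,j}(ξ) = ∏_{k=1}^{j−1} t_{{k,i},{k,j}}(ξ) · ∏_{l=j+1}^{i−1} t_{{l,i},{j,l}}(−ξ) · ∏_{m=i+1}^{n} t_{{i,m},{j,m}}(ξ). -/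
open Finset MvPolynomial Matrix

/-! ### Auxiliary lemmas for statement 5 -/

/-- make a 2-element subset, with default junk `d` -/
def pairV {n : ℕ} (d : V n) (a b : Fin n) : V n :=
  if h : a ≠ b then ⟨{a, b}, Finset.card_pair h⟩ else d

lemma pairV_eq {n : ℕ} (d : V n) {a b : Fin n} (h : a ≠ b) (h2) :
    pairV d a b = ⟨{a, b}, h2⟩ := by simp [pairV, h]

lemma pairV_val {n : ℕ} (d : V n) {a b : Fin n} (h : a ≠ b) :
    (pairV d a b).1 = {a, b} := by simp [pairV, h]

lemma pairV_eq_iff {n : ℕ} (d : V n) {a b : Fin n} (h : a ≠ b) (A : V n) :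
    pairV d a b = A ↔ ({a, b} : Finset (Fin n)) = A.1 := by
  rw [pairV, dif_pos h, Subtype.ext_iff]

lemma lo_hi_spec {n : ℕ} (S : V n) : lo S < hi S ∧ S.1 = {lo S, hi S} := by
  have hlt : lo S < hi S := Finset.min'_lt_max'_of_card _ (by rw [S.2]; norm_num)
  refine ⟨hlt, ?_⟩
  have h1 : lo S ∈ S.1 := Finset.min'_mem _ _
  have h2' : hi S ∈ S.1 := Finset.max'_mem _ _
  have hsub : ({lo S, hi S} : Finset (Fin n)) ⊆ S.1 := by
    intro x hx; rcases Finset.mem_insert.mp hx with rfl | hx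
    · exact h1
    · simpa using Finset.mem_singleton.mp hx ▸ h2'
  exact (Finset.eq_of_subset_of_card_le hsub
    (by rw [S.2, Finset.card_pair hlt.ne])).symm

lemma lo_pair {n : ℕ} {a b : Fin n} (h : a < b) (h2) :
    lo (⟨{a, b}, h2⟩ : V n) = a := by
  refine le_antisymm (Finset.min'_le _ _ (by simp)) (Finset.le_min' _ _ _ ?_)
  intro y hy
  rcases Finset.mem_insert.mp hy with rfl | hy
  · exact le_refl _
  · rw [Finset.mem_singleton.mp hy]; exact h.le

lemma hi_pair {n : ℕ} {a b : Fin n} (h : a < b) (h2) :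
    hi (⟨{a, b}, h2⟩ : V n) = b := by
  refine le_antisymm (Finset.max'_le _ _ _ ?_) (Finset.le_max' _ _ (by simp))
  intro y hy
  rcases Finset.mem_insert.mp hy with rfl | hy
  · exact h.le
  · rw [Finset.mem_singleton.mp hy]

lemma finset_pair_eq {n : ℕ} {a b c d : Fin n} :
    ({a, b} : Finset (Fin n)) = {c, d} ↔ (a = c ∧ b = d) ∨ (a = d ∧ b = c) := by
  rw [← Finset.coe_inj]
  simp only [Finset.coe_insert, Finset.coe_singleton, Set.pair_eq_pair_iff]

section listlemmas
variable {R : Type*} [CommRing R] {m : Type*} [Fintype m] [DecidableEq m]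

lemma std_mul_sum (a : m × m × R) (l : List (m × m × R))
    (h : ∀ q ∈ l, a.2.1 ≠ q.1) :
    Matrix.single a.1 a.2.1 a.2.2 *
      (l.map fun p => Matrix.single p.1 p.2.1 p.2.2).sum = 0 := by
  induction l with
  | nil => simp
  | cons b l ih =>
    simp only [List.map_cons, List.sum_cons, mul_add]
    rw [Matrix.single_mul_single_of_ne (h := h b (List.mem_cons_self)),
      ih (fun q hq => h q (List.mem_cons_of_mem _ hq)), add_zero]

lemma prodOneAdd (l : List (m × m × R))
    (h : ∀ p ∈ l, ∀ q ∈ l, p.2.1 ≠ q.1) :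
    (l.map fun p => (1 : Matrix m m R) + Matrix.single p.1 p.2.1 p.2.2).prod
      = 1 + (l.map fun p => Matrix.single p.1 p.2.1 p.2.2).sum := by
  induction l with
  | nil => simp
  | cons a l ih =>
    have h' : ∀ p ∈ l, ∀ q ∈ l, p.2.1 ≠ q.1 := fun p hp q hq =>
      h p (List.mem_cons_of_mem _ hp) q (List.mem_cons_of_mem _ hq)
    simp only [List.map_cons, List.prod_cons, List.sum_cons, ih h']
    have hz := std_mul_sum a l
      (fun q hq => h a (List.mem_cons_self) q (List.mem_cons_of_mem _ hq))
    rw [mul_add, mul_one, add_mul, one_mul, hz, add_zero]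
    abel

omit [Fintype m] [DecidableEq m] in
lemma list_sum_apply_s5 {m' : Type*} {α : Type*} (l : List α) (g : α → Matrix m m' R)
    (A : m) (B : m') : (l.map g).sum A B = (l.map fun k => g k A B).sum := by
  induction l with
  | nil => simp [Matrix.zero_apply]
  | cons a l ih => simp [Matrix.add_apply, ih]

end listlemmas

lemma filter_toFinset {n : ℕ} (p : Fin n → Prop) [DecidablePred p] :
    ((List.finRange n).filter (fun k => decide (p k))).toFinset
      = Finset.univ.filter p := by
  ext k
  simp [List.mem_filter, List.mem_finRange]

lemma transvN_eq_s5 {R : Type*} [CommRing R] {n : ℕ} (d : V n) {a b c e : Fin n}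
    (hab : a ≠ b) (hce : c ≠ e) (hne : ({a, b} : Finset (Fin n)) ≠ {c, e}) (ξ : R) :
    transvN R n {a, b} {c, e} ξ
      = 1 + Matrix.single (pairV d a b) (pairV d c e) ξ := by
  rw [transvN, dif_pos ⟨Finset.card_pair hab, Finset.card_pair hce, hne⟩,
    pairV_eq d hab, pairV_eq d hce]

lemma endgame (R : Type*) [CommRing R] (ξ : R) (a a' b b' ii jj : ℕ)
    (hA : a < a') (hB : b < b') (hJ : jj < ii) :
    ((if a = b then (1:R) else 0) + if ii = a ∧ jj = b then ξ else 0) *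
        ((if a' = b' then 1 else 0) + if ii = a' ∧ jj = b' then ξ else 0) -
      ((if a = b' then 1 else 0) + if ii = a ∧ jj = b' then ξ else 0) *
        ((if a' = b then 1 else 0) + if ii = a' ∧ jj = b then ξ else 0) =
    (if a = b ∧ a' = b' ∨ a = b' ∧ a' = b then 1 else 0) +
      (((if b < jj ∧ (b = a ∧ ii = a' ∨ b = a' ∧ ii = a) ∧ (jj = b' ∨ b = b' ∧ jj = b)
          then ξ else 0) +
        if jj < b' ∧ b' < ii ∧ (b' = a ∧ ii = a' ∨ b' = a' ∧ ii = a) ∧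
            (jj = b ∨ jj = b' ∧ b' = b) then -ξ else 0) +
       if ii < b' ∧ (ii = a ∧ b' = a' ∨ ii = a' ∧ b' = a) ∧
            (jj = b ∨ jj = b' ∧ b' = b) then ξ else 0) := by
  have key1 : ((if a = b then (1:R) else 0) + if ii = a ∧ jj = b then ξ else 0) *
      ((if a' = b' then 1 else 0) + if ii = a' ∧ jj = b' then ξ else 0)
      = (if a = b ∧ a' = b' then 1 else 0)
        + ((if a = b ∧ ii = a' ∧ jj = b' then ξ else 0)
        + (if ii = a ∧ jj = b ∧ a' = b' then ξ else 0)) := by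
    split_ifs <;> first | ring1 | omega
  have key2 : ((if a = b' then (1:R) else 0) + if ii = a ∧ jj = b' then ξ else 0) *
      ((if a' = b then 1 else 0) + if ii = a' ∧ jj = b then ξ else 0)
      = (if a = b' ∧ ii = a' ∧ jj = b then ξ else 0) := by
    split_ifs <;> first | ring1 | omega
  rw [key1, key2,
    if_congr (show (b < jj ∧ (b = a ∧ ii = a' ∨ b = a' ∧ ii = a) ∧
        (jj = b' ∨ b = b' ∧ jj = b)) ↔ (a = b ∧ ii = a' ∧ jj = b') by omega) rfl rfl,
    if_congr (show (jj < b' ∧ b' < ii ∧ (b' = a ∧ ii = a' ∨ b' = a' ∧ ii = a) ∧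
        (jj = b ∨ jj = b' ∧ b' = b)) ↔ (a = b' ∧ ii = a' ∧ jj = b) by omega) rfl rfl,
    if_congr (show (ii < b' ∧ (ii = a ∧ b' = a' ∨ ii = a' ∧ b' = a) ∧
        (jj = b ∨ jj = b' ∧ b' = b)) ↔ (ii = a ∧ jj = b ∧ a' = b') by omega) rfl rfl,
    if_congr (show (a = b ∧ a' = b' ∨ a = b' ∧ a' = b) ↔ (a = b ∧ a' = b') by omega) rfl rfl]
  have hneg : (if a = b' ∧ ii = a' ∧ jj = b then -ξ else 0)
      = -(if a = b' ∧ ii = a' ∧ jj = b then ξ else 0) := by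
    split_ifs <;> simp
  rw [hneg]; ring

/-- for `j < i`, the exterior square of an elementary transvection decomposes
as `∧²t_{i,j}(ξ) = ∏_{k<j} t_{{k,i},{k,j}}(ξ) · ∏_{j<l<i} t_{{l,i},{j,l}}(−ξ) ·
∏_{i<m} t_{{i,m},{j,m}}(ξ)`. -/
theorem stmt5 (R : Type*) [CommRing R] (n : ℕ) (hn : 3 ≤ n)
    (i j : Fin n) (hji : j < i) (ξ : R) :
    wedge (1 + Matrix.single i j ξ) =
      (((List.finRange n).filter (fun k => decide (k < j))).map
          (fun k => transvN R n {k, i} {k, j} ξ)).prod *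
      (((List.finRange n).filter (fun l => decide (j < l ∧ l < i))).map
          (fun l => transvN R n {l, i} {j, l} (-ξ))).prod *
      (((List.finRange n).filter (fun m => decide (i < m))).map
          (fun m => transvN R n {i, m} {j, m} ξ)).prod := by
  classical
  have hij : (j : Fin n) ≠ i := ne_of_lt hji
  set d : V n := ⟨{j, i}, Finset.card_pair hij⟩ with hd
  set L1 : List (V n × V n × R) :=
    ((List.finRange n).filter (fun k => decide (k < j))).map
      (fun k => (pairV d k i, pairV d k j, ξ)) with hL1
  set L2 : List (V n × V n × R) :=
    ((List.finRange n).filter (fun l => decide (j < l ∧ l < i))).map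
      (fun l => (pairV d l i, pairV d j l, -ξ)) with hL2
  set L3 : List (V n × V n × R) :=
    ((List.finRange n).filter (fun m => decide (i < m))).map
      (fun m => (pairV d i m, pairV d j m, ξ)) with hL3
  have hp1 : (((List.finRange n).filter (fun k => decide (k < j))).map
      (fun k => transvN R n {k, i} {k, j} ξ)).prod
      = (L1.map fun p => (1 : Matrix (V n) (V n) R)
          + Matrix.single p.1 p.2.1 p.2.2).prod := by
    rw [hL1, List.map_map]
    refine congrArg _ (List.map_congr_left ?_)
    intro k hk
    have hkj : k < j := of_decide_eq_true (List.mem_filter.mp hk).2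
    have hki : k < i := hkj.trans hji
    show transvN R n {k, i} {k, j} ξ = _
    refine transvN_eq_s5 d hki.ne hkj.ne (fun h => ?_) ξ
    have hmem : i ∈ ({k, j} : Finset (Fin n)) := h ▸ (by simp)
    simp only [Finset.mem_insert, Finset.mem_singleton] at hmem
    rcases hmem with h' | h'
    · exact hki.ne' h'
    · exact hji.ne' h'
  have hp2 : (((List.finRange n).filter (fun l => decide (j < l ∧ l < i))).map
      (fun l => transvN R n {l, i} {j, l} (-ξ))).prod
      = (L2.map fun p => (1 : Matrix (V n) (V n) R)
          + Matrix.single p.1 p.2.1 p.2.2).prod := by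
    rw [hL2, List.map_map]
    refine congrArg _ (List.map_congr_left ?_)
    intro l hl
    have hl' : j < l ∧ l < i := of_decide_eq_true (List.mem_filter.mp hl).2
    show transvN R n {l, i} {j, l} (-ξ) = _
    refine transvN_eq_s5 d hl'.2.ne (hl'.1.ne) (fun h => ?_) (-ξ)
    have hmem : i ∈ ({j, l} : Finset (Fin n)) := h ▸ (by simp)
    simp only [Finset.mem_insert, Finset.mem_singleton] at hmem
    rcases hmem with h' | h'
    · exact hji.ne' h'
    · exact hl'.2.ne' h'
  have hp3 : (((List.finRange n).filter (fun m => decide (i < m))).map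
      (fun m => transvN R n {i, m} {j, m} ξ)).prod
      = (L3.map fun p => (1 : Matrix (V n) (V n) R)
          + Matrix.single p.1 p.2.1 p.2.2).prod := by
    rw [hL3, List.map_map]
    refine congrArg _ (List.map_congr_left ?_)
    intro mm hm
    have hm' : i < mm := of_decide_eq_true (List.mem_filter.mp hm).2
    show transvN R n {i, mm} {j, mm} ξ = _
    refine transvN_eq_s5 d hm'.ne (fun h => (hji.trans hm').ne h) (fun h => ?_) ξ
    have hmem : i ∈ ({j, mm} : Finset (Fin n)) := h ▸ (by simp)
    simp only [Finset.mem_insert, Finset.mem_singleton] at hmem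
    rcases hmem with h' | h'
    · exact hji.ne' h'
    · exact hm'.ne h'
  have hjmem : ∀ p ∈ (L1 ++ L2) ++ L3, j ∈ p.2.1.1 ∧ j ∉ p.1.1 := by
    intro p hp
    simp only [List.mem_append] at hp
    rcases hp with (hp | hp) | hp
    · rw [hL1] at hp
      obtain ⟨k, hk, rfl⟩ := List.mem_map.mp hp
      have hkj : k < j := of_decide_eq_true (List.mem_filter.mp hk).2
      have hki : k < i := hkj.trans hji
      refine ⟨by rw [pairV_val d hkj.ne]; simp, ?_⟩
      rw [pairV_val d hki.ne]
      simp only [Finset.mem_insert, Finset.mem_singleton]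
      push_neg
      exact ⟨hkj.ne', hji.ne⟩
    · rw [hL2] at hp
      obtain ⟨l, hl, rfl⟩ := List.mem_map.mp hp
      have hl' : j < l ∧ l < i := of_decide_eq_true (List.mem_filter.mp hl).2
      refine ⟨by rw [pairV_val d hl'.1.ne]; simp, ?_⟩
      rw [pairV_val d hl'.2.ne]
      simp only [Finset.mem_insert, Finset.mem_singleton]
      push_neg
      exact ⟨hl'.1.ne, hji.ne⟩
    · rw [hL3] at hp
      obtain ⟨mm, hm, rfl⟩ := List.mem_map.mp hp
      have hm' : i < mm := of_decide_eq_true (List.mem_filter.mp hm).2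
      refine ⟨by rw [pairV_val d (hji.trans hm').ne]; simp, ?_⟩
      rw [pairV_val d hm'.ne]
      simp only [Finset.mem_insert, Finset.mem_singleton]
      push_neg
      exact ⟨hji.ne, (hji.trans hm').ne⟩
  have horth : ∀ p ∈ (L1 ++ L2) ++ L3, ∀ q ∈ (L1 ++ L2) ++ L3, p.2.1 ≠ q.1 := by
    intro p hp q hq h
    exact (hjmem q hq).2 (h ▸ (hjmem p hp).1)
  rw [hp1, hp2, hp3, ← List.prod_append, ← List.prod_append, ← List.map_append,
    ← List.map_append, prodOneAdd _ horth]
  ext A B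
  obtain ⟨hAlt, hAeq⟩ := lo_hi_spec A
  obtain ⟨hBlt, hBeq⟩ := lo_hi_spec B
  rw [Matrix.add_apply, list_sum_apply_s5, List.map_append, List.map_append,
    List.sum_append, List.sum_append]
  have e1 : (L1.map fun p =>
        Matrix.single p.1 p.2.1 p.2.2 A B).sum
      = (if lo B < j ∧ ({lo B, i} : Finset (Fin n)) = A.1
          ∧ ({lo B, j} : Finset (Fin n)) = B.1 then ξ else 0) := by
    rw [hL1, List.map_map,
      ← List.sum_toFinset _ ((List.nodup_finRange n).filter _),
      filter_toFinset (fun k => k < j), Finset.sum_filter]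
    refine (Finset.sum_eq_single (lo B) ?_ ?_).trans ?_
    · intro k _ hk
      by_cases hkj : k < j
      · rw [if_pos hkj]
        simp only [Function.comp_apply, Matrix.single, Matrix.of_apply]
        rw [if_neg]
        rintro ⟨-, h2⟩
        rw [pairV_eq_iff d hkj.ne] at h2
        have hBk : B = ⟨{k, j}, Finset.card_pair hkj.ne⟩ :=
          Subtype.ext h2.symm
        have : lo B = k := by rw [hBk]; exact lo_pair hkj _
        exact hk this.symm
      · rw [if_neg hkj]
    · intro h; exact absurd (Finset.mem_univ _) h
    · by_cases hb : lo B < j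
      · have hbi : lo B ≠ i := (hb.trans hji).ne
        rw [if_pos hb]
        simp only [Function.comp_apply, Matrix.single, Matrix.of_apply]
        refine if_congr ?_ rfl rfl
        rw [pairV_eq_iff d hbi, pairV_eq_iff d hb.ne]
        constructor
        · rintro ⟨h1, h2⟩; exact ⟨hb, h1, h2⟩
        · rintro ⟨-, h1, h2⟩; exact ⟨h1, h2⟩
      · rw [if_neg hb, if_neg (fun h => hb h.1)]
  have e2 : (L2.map fun p =>
        Matrix.single p.1 p.2.1 p.2.2 A B).sum
      = (if j < hi B ∧ hi B < i ∧ ({hi B, i} : Finset (Fin n)) = A.1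
          ∧ ({j, hi B} : Finset (Fin n)) = B.1 then -ξ else 0) := by
    rw [hL2, List.map_map,
      ← List.sum_toFinset _ ((List.nodup_finRange n).filter _),
      filter_toFinset (fun l => j < l ∧ l < i), Finset.sum_filter]
    refine (Finset.sum_eq_single (hi B) ?_ ?_).trans ?_
    · intro l _ hl
      by_cases hlc : j < l ∧ l < i
      · rw [if_pos hlc]
        simp only [Function.comp_apply, Matrix.single, Matrix.of_apply]
        rw [if_neg]
        rintro ⟨-, h2⟩
        rw [pairV_eq_iff d hlc.1.ne] at h2
        have hBk : B = ⟨{j, l}, Finset.card_pair hlc.1.ne⟩ :=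
          Subtype.ext h2.symm
        have : hi B = l := by rw [hBk]; exact hi_pair hlc.1 _
        exact hl this.symm
      · rw [if_neg hlc]
    · intro h; exact absurd (Finset.mem_univ _) h
    · by_cases hb : j < hi B ∧ hi B < i
      · rw [if_pos hb]
        simp only [Function.comp_apply, Matrix.single, Matrix.of_apply]
        refine if_congr ?_ rfl rfl
        rw [pairV_eq_iff d hb.2.ne, pairV_eq_iff d hb.1.ne]
        constructor
        · rintro ⟨h1, h2⟩; exact ⟨hb.1, hb.2, h1, h2⟩
        · rintro ⟨-, -, h1, h2⟩; exact ⟨h1, h2⟩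
      · rw [if_neg hb, if_neg (fun h => hb ⟨h.1, h.2.1⟩)]
  have e3 : (L3.map fun p =>
        Matrix.single p.1 p.2.1 p.2.2 A B).sum
      = (if i < hi B ∧ ({i, hi B} : Finset (Fin n)) = A.1
          ∧ ({j, hi B} : Finset (Fin n)) = B.1 then ξ else 0) := by
    rw [hL3, List.map_map,
      ← List.sum_toFinset _ ((List.nodup_finRange n).filter _),
      filter_toFinset (fun m => i < m), Finset.sum_filter]
    refine (Finset.sum_eq_single (hi B) ?_ ?_).trans ?_
    · intro mm _ hm
      by_cases hmc : i < mm
      · rw [if_pos hmc]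
        simp only [Function.comp_apply, Matrix.single, Matrix.of_apply]
        rw [if_neg]
        rintro ⟨-, h2⟩
        have hjm : j < mm := hji.trans hmc
        rw [pairV_eq_iff d hjm.ne] at h2
        have hBk : B = ⟨{j, mm}, Finset.card_pair hjm.ne⟩ :=
          Subtype.ext h2.symm
        have : hi B = mm := by rw [hBk]; exact hi_pair hjm _
        exact hm this.symm
      · rw [if_neg hmc]
    · intro h; exact absurd (Finset.mem_univ _) h
    · by_cases hb : i < hi B
      · rw [if_pos hb]
        simp only [Function.comp_apply, Matrix.single, Matrix.of_apply]
        refine if_congr ?_ rfl rfl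
        rw [pairV_eq_iff d hb.ne, pairV_eq_iff d (hji.trans hb).ne]
        constructor
        · rintro ⟨h1, h2⟩; exact ⟨hb, h1, h2⟩
        · rintro ⟨-, h1, h2⟩; exact ⟨h1, h2⟩
      · rw [if_neg hb, if_neg (fun h => hb h.1)]
  rw [e1, e2, e3]
  simp only [wedge, Matrix.add_apply, Matrix.one_apply, Matrix.single,
    Matrix.of_apply, Subtype.ext_iff, hAeq, hBeq, finset_pair_eq, Fin.ext_iff,
    Fin.lt_def]
  rw [Fin.lt_def] at hAlt hBlt hji
  simp only [true_and, and_true]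
  exact endgame R ξ (lo A).val (hi A).val (lo B).val (hi B).val i.val j.val hAlt hBlt hji
end

section
/- Let R be a commutative ring, n ≥ 3, i ≠ j in [n] and ξ ∈ R. Then the matrix ∧²t_{i,j}(ξ) ∈ GL_N(R) is a product of at most n − 2 elementary transvections of GL_N(R); that is, ∧²t_{i,j}(ξ) ∈ E^{n−2}(N,R). -/
open Finset MvPolynomial Matrix

section Aux

variable {n : ℕ}

lemma lo_eq (A : V n) {a b : Fin n} (h : A.1 = {a, b}) (hab : a < b) : lo A = a := by
  have ha : a ∈ A.1 := by rw [h]; exact Finset.mem_insert_self a {b}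
  refine le_antisymm (Finset.min'_le _ _ ha) (Finset.le_min' _ _ _ ?_)
  intro y hy
  rw [h, Finset.mem_insert, Finset.mem_singleton] at hy
  rcases hy with rfl | rfl
  · exact le_refl _
  · exact hab.le

lemma hi_eq (A : V n) {a b : Fin n} (h : A.1 = {a, b}) (hab : a < b) : hi A = b := by
  have hb : b ∈ A.1 := by rw [h]; simp
  refine le_antisymm (Finset.max'_le _ _ _ ?_) (Finset.le_max' _ _ hb)
  intro y hy
  rw [h, Finset.mem_insert, Finset.mem_singleton] at hy
  rcases hy with rfl | rfl
  · exact hab.le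
  · exact le_refl _

lemma exists_sorted (A : V n) : ∃ a b : Fin n, a < b ∧ A.1 = {a, b} := by
  obtain ⟨x, y, hxy, hA⟩ := Finset.card_eq_two.mp A.2
  rcases lt_or_gt_of_ne hxy with h | h
  · exact ⟨x, y, h, hA⟩
  · exact ⟨y, x, h, by rw [hA, Finset.pair_comm]⟩

lemma pair_eq_sorted {a b c d : Fin n} (hab : a < b) (hcd : c < d)
    (h : ({a, b} : Finset (Fin n)) = {c, d}) : a = c ∧ b = d := by
  have ha : a = c ∨ a = d := by
    have : a ∈ ({c, d} : Finset (Fin n)) := h ▸ by simp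
    simpa using this
  have hb : b = c ∨ b = d := by
    have : b ∈ ({c, d} : Finset (Fin n)) := h ▸ by simp
    simpa using this
  have hc : c = a ∨ c = b := by
    have : c ∈ ({a, b} : Finset (Fin n)) := h ▸ by simp
    simpa using this
  rcases ha with rfl | rfl
  · rcases hb with rfl | rfl
    · exact absurd hab (lt_irrefl _)
    · exact ⟨rfl, rfl⟩
  · rcases hc with rfl | rfl
    · exact absurd hcd (lt_irrefl _)
    · exact absurd (hab.trans hcd) (lt_irrefl _) -- c=b: b<a? a=d, c=b: hcd : b < a, hab : a < b

/-- Auxiliary: the off-diagonal part of the `k`-th factor. -/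
def EE (R : Type*) [CommRing R] {n : ℕ} (i j : Fin n) (ξ : R) (k : Fin n) :
    Matrix (V n) (V n) R :=
  if h : i ≠ k ∧ j ≠ k ∧ i ≠ j then
    Matrix.single ⟨{i, k}, Finset.card_pair h.1⟩ ⟨{j, k}, Finset.card_pair h.2.1⟩
      (if (k < i ↔ k < j) then ξ else -ξ)
  else 0

lemma EE_mul_EE {R : Type*} [CommRing R] {n : ℕ} (i j : Fin n) (ξ : R) (k k' : Fin n) :
    EE R i j ξ k * EE R i j ξ k' = 0 := by
  by_cases h1 : i ≠ k ∧ j ≠ k ∧ i ≠ j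
  · by_cases h2 : i ≠ k' ∧ j ≠ k' ∧ i ≠ j
    · rw [EE, EE, dif_pos h1, dif_pos h2]
      refine Matrix.single_mul_single_of_ne _ _ _ _ ?_ _
      intro he
      have hj : j ∈ ({i, k'} : Finset (Fin n)) := by
        have h3 := congrArg Subtype.val he
        simp only at h3
        rw [← h3]; simp
      rcases Finset.mem_insert.mp hj with h | h
      · exact h2.2.2 h.symm
      · exact h2.2.1 (Finset.mem_singleton.mp h)
    · simp only [EE]; rw [dif_neg h2, mul_zero]
  · simp only [EE]; rw [dif_neg h1, zero_mul]

lemma EE_mul_sum {R : Type*} [CommRing R] {n : ℕ} (i j : Fin n) (ξ : R) (k : Fin n)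
    (l : List (Fin n)) :
    EE R i j ξ k * (l.map (EE R i j ξ)).sum = 0 := by
  induction l with
  | nil => simp
  | cons a t ih => simp [mul_add, EE_mul_EE, ih]

lemma prod_one_add_EE {R : Type*} [CommRing R] {n : ℕ} (i j : Fin n) (ξ : R)
    (l : List (Fin n)) :
    (l.map (fun k => (1 : Matrix (V n) (V n) R) + EE R i j ξ k)).prod
      = 1 + (l.map (EE R i j ξ)).sum := by
  induction l with
  | nil => simp
  | cons a t ih =>
      rw [List.map_cons, List.prod_cons, ih, List.map_cons, List.sum_cons,
        mul_add, mul_one, add_mul, one_mul, EE_mul_sum, add_zero]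
      abel

lemma EE_apply {R : Type*} [CommRing R] {n : ℕ} {i j k : Fin n} (ξ : R)
    (h : i ≠ k ∧ j ≠ k ∧ i ≠ j) (A B : V n) :
    EE R i j ξ k A B =
      if (({i, k} : Finset (Fin n)) = A.1 ∧ ({j, k} : Finset (Fin n)) = B.1) then
        (if (k < i ↔ k < j) then ξ else -ξ) else 0 := by
  rw [EE, dif_pos h]
  simp [Matrix.single, Subtype.ext_iff]

lemma t_apply {R : Type*} [CommRing R] {n : ℕ} (i j : Fin n) (ξ : R) (a b : Fin n) :
    (1 + Matrix.single i j ξ) a b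
      = (if a = b then (1 : R) else 0) + (if i = a ∧ j = b then ξ else 0) := by
  simp [Matrix.add_apply, Matrix.one_apply, Matrix.single]

lemma t_same {R : Type*} [CommRing R] {n : ℕ} {i j : Fin n} (ξ : R) (hij : i ≠ j)
    (a : Fin n) : (1 + Matrix.single i j ξ) a a = 1 := by
  rw [t_apply, if_pos rfl, if_neg, add_zero]
  rintro ⟨rfl, rfl⟩; exact hij rfl

lemma t_ij {R : Type*} [CommRing R] {n : ℕ} {i j : Fin n} (ξ : R) (hij : i ≠ j) :
    (1 + Matrix.single i j ξ) i j = ξ := by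
  rw [t_apply, if_neg hij, if_pos ⟨rfl, rfl⟩, zero_add]

lemma t_zero {R : Type*} [CommRing R] {n : ℕ} {i j : Fin n} (ξ : R) {a b : Fin n}
    (hab : a ≠ b) (h : ¬(i = a ∧ j = b)) :
    (1 + Matrix.single i j ξ) a b = 0 := by
  rw [t_apply, if_neg hab, if_neg h, add_zero]

lemma entry_mul_zero {R : Type*} [CommRing R] {n : ℕ} {i j : Fin n} (ξ : R)
    {a b c d : Fin n} (hab : a ≠ b)
    (h1 : ¬(a = c ∧ b = d))
    (h2 : ¬(a = c ∧ i = b ∧ j = d))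
    (h3 : ¬(i = a ∧ j = c ∧ b = d)) :
    (1 + Matrix.single i j ξ) a c * (1 + Matrix.single i j ξ) b d = 0 := by
  rw [t_apply, t_apply]
  split_ifs <;> first | ring1 | simp_all

lemma key_diag {R : Type*} [CommRing R] {n : ℕ} {i j : Fin n} (ξ : R) (hij : i ≠ j)
    {a b : Fin n} (hab : a ≠ b) :
    (1 + Matrix.single i j ξ) a a * (1 + Matrix.single i j ξ) b b
      - (1 + Matrix.single i j ξ) a b * (1 + Matrix.single i j ξ) b a = 1 := by
  have e : (1 + Matrix.single i j ξ) a b * (1 + Matrix.single i j ξ) b a = 0 :=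
    entry_mul_zero ξ hab (fun h => hab h.1) (fun h => hab h.1) (fun h => hab h.2.2.symm)
  rw [t_same ξ hij, t_same ξ hij, e]; ring

lemma key_zero {R : Type*} [CommRing R] {n : ℕ} {i j : Fin n} (ξ : R) (hij : i ≠ j)
    {a b c d : Fin n} (hab : a < b) (hcd : c < d)
    (hAB : ({a, b} : Finset (Fin n)) ≠ {c, d})
    (hne : ¬ ∃ k : Fin n, k ≠ i ∧ k ≠ j ∧ ({a, b} : Finset (Fin n)) = {i, k} ∧
      ({c, d} : Finset (Fin n)) = {j, k}) :
    (1 + Matrix.single i j ξ) a c * (1 + Matrix.single i j ξ) b d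
      - (1 + Matrix.single i j ξ) a d * (1 + Matrix.single i j ξ) b c = 0 := by
  have e1 : (1 + Matrix.single i j ξ) a c * (1 + Matrix.single i j ξ) b d = 0 := by
    refine entry_mul_zero ξ hab.ne ?_ ?_ ?_
    · rintro ⟨rfl, rfl⟩; exact hAB rfl
    · rintro ⟨rfl, rfl, rfl⟩
      exact hne ⟨a, hab.ne, hcd.ne, Finset.pair_comm a i, Finset.pair_comm a j⟩
    · rintro ⟨rfl, rfl, rfl⟩
      exact hne ⟨b, hab.ne', hcd.ne', rfl, rfl⟩
  have e2 : (1 + Matrix.single i j ξ) a d * (1 + Matrix.single i j ξ) b c = 0 := by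
    refine entry_mul_zero ξ hab.ne ?_ ?_ ?_
    · rintro ⟨rfl, rfl⟩; exact absurd (hab.trans hcd) (lt_irrefl _)
    · rintro ⟨rfl, rfl, rfl⟩
      exact hne ⟨a, hab.ne, hcd.ne', Finset.pair_comm a i, rfl⟩
    · rintro ⟨rfl, rfl, rfl⟩
      exact hne ⟨b, hab.ne', hcd.ne, rfl, Finset.pair_comm b j⟩
  rw [e1, e2]; ring

lemma key_val {R : Type*} [CommRing R] {n : ℕ} {i j k : Fin n} (ξ : R) (hij : i ≠ j)
    (hik : i ≠ k) (hjk : j ≠ k) {a b c d : Fin n}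
    (hab : a < b) (hcd : c < d) (hA : ({a, b} : Finset (Fin n)) = {i, k})
    (hB : ({c, d} : Finset (Fin n)) = {j, k}) :
    (1 + Matrix.single i j ξ) a c * (1 + Matrix.single i j ξ) b d
      - (1 + Matrix.single i j ξ) a d * (1 + Matrix.single i j ξ) b c
      = if (k < i ↔ k < j) then ξ else -ξ := by
  rcases hik.lt_or_gt with h1 | h1
  · obtain ⟨ha, hb⟩ := pair_eq_sorted hab h1 hA
    rcases hjk.lt_or_gt with h2 | h2
    · obtain ⟨hc, hd⟩ := pair_eq_sorted hcd h2 hB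
      rw [ha, hb, hc, hd, t_ij ξ hij, t_same ξ hij,
        t_zero ξ hik (fun h => hjk h.2), t_zero ξ (Ne.symm hjk) (fun h => hik h.1),
        if_pos (iff_of_false h1.asymm h2.asymm)]
      ring
    · obtain ⟨hc, hd⟩ := pair_eq_sorted hcd h2 (hB.trans (Finset.pair_comm j k))
      rw [ha, hb, hc, hd, t_ij ξ hij, t_same ξ hij,
        t_zero ξ hik (fun h => hjk h.2), t_zero ξ (Ne.symm hjk) (fun h => hik h.1),
        if_neg (fun hIff => h1.asymm (hIff.mpr h2))]
      ring
  · obtain ⟨ha, hb⟩ := pair_eq_sorted hab h1 (hA.trans (Finset.pair_comm i k))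
    rcases hjk.lt_or_gt with h2 | h2
    · obtain ⟨hc, hd⟩ := pair_eq_sorted hcd h2 hB
      rw [ha, hb, hc, hd, t_ij ξ hij, t_same ξ hij,
        t_zero ξ hik (fun h => hjk h.2), t_zero ξ (Ne.symm hjk) (fun h => hik h.1),
        if_neg (fun hIff => h2.asymm (hIff.mp h1))]
      ring
    · obtain ⟨hc, hd⟩ := pair_eq_sorted hcd h2 (hB.trans (Finset.pair_comm j k))
      rw [ha, hb, hc, hd, t_ij ξ hij, t_same ξ hij,
        t_zero ξ hik (fun h => hjk h.2), t_zero ξ (Ne.symm hjk) (fun h => hik h.1),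
        if_pos (iff_of_true h1 h2)]
      ring

lemma transvN_eq_s7 {R : Type*} [CommRing R] {n : ℕ} {i j k : Fin n}
    (hik : i ≠ k) (hjk : j ≠ k) (hij : i ≠ j) (ξ : R) :
    transvN R n {i, k} {j, k} (if (k < i ↔ k < j) then ξ else -ξ) = 1 + EE R i j ξ k := by
  have hST : ({i, k} : Finset (Fin n)) ≠ {j, k} := by
    intro h
    have hm : j ∈ ({i, k} : Finset (Fin n)) := by rw [h]; simp
    rcases Finset.mem_insert.mp hm with h' | h'
    · exact hij h'.symm
    · exact hjk (Finset.mem_singleton.mp h')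
  rw [transvN, dif_pos ⟨Finset.card_pair hik, Finset.card_pair hjk, hST⟩, EE,
    dif_pos ⟨hik, hjk, hij⟩]

lemma wedge_eq {R : Type*} [CommRing R] {n : ℕ} {i j : Fin n} (hij : i ≠ j) (ξ : R) :
    wedge (1 + Matrix.single i j ξ)
      = 1 + ∑ k ∈ Finset.univ \ ({i, j} : Finset (Fin n)), EE R i j ξ k := by
  ext A B
  obtain ⟨a, b, hab, hA⟩ := exists_sorted A
  obtain ⟨c, d, hcd, hB⟩ := exists_sorted B
  have hloA : lo A = a := lo_eq A hA hab
  have hhiA : hi A = b := hi_eq A hA hab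
  have hloB : lo B = c := lo_eq B hB hcd
  have hhiB : hi B = d := hi_eq B hB hcd
  have hsum : ∀ k ∈ Finset.univ \ ({i, j} : Finset (Fin n)),
      EE R i j ξ k A B =
        if (({i, k} : Finset (Fin n)) = {a, b} ∧ ({j, k} : Finset (Fin n)) = {c, d}) then
          (if (k < i ↔ k < j) then ξ else -ξ) else 0 := by
    intro k hk
    rw [Finset.mem_sdiff, Finset.mem_insert, Finset.mem_singleton] at hk
    have hik : i ≠ k := fun h => hk.2 (Or.inl h.symm)
    have hjk : j ≠ k := fun h => hk.2 (Or.inr h.symm)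
    rw [EE_apply ξ ⟨hik, hjk, hij⟩, hA, hB]
  rw [Matrix.add_apply, Matrix.sum_apply, Finset.sum_congr rfl hsum,
    wedge, hloA, hhiA, hloB, hhiB]
  by_cases hex : ∃ k : Fin n, k ≠ i ∧ k ≠ j ∧ ({a, b} : Finset (Fin n)) = {i, k} ∧
      ({c, d} : Finset (Fin n)) = {j, k}
  · obtain ⟨k0, hk0i, hk0j, h1, h2⟩ := hex
    have hABne : A ≠ B := by
      intro h
      have : i ∈ B.1 := by rw [← h, hA, h1]; simp
      rw [hB, h2, Finset.mem_insert, Finset.mem_singleton] at this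
      rcases this with h' | h'
      · exact hij h'
      · exact hk0i h'.symm
    have hmem : k0 ∈ Finset.univ \ ({i, j} : Finset (Fin n)) := by
      simp [hk0i, hk0j]
    have hsum2 : (∑ k ∈ Finset.univ \ ({i, j} : Finset (Fin n)),
        if (({i, k} : Finset (Fin n)) = {a, b} ∧ ({j, k} : Finset (Fin n)) = {c, d}) then
          (if (k < i ↔ k < j) then ξ else -ξ) else 0)
        = (if (k0 < i ↔ k0 < j) then ξ else -ξ) := by
      rw [Finset.sum_eq_single_of_mem k0 hmem]
      · rw [if_pos ⟨h1.symm, h2.symm⟩]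
      · intro k hk hkk0
        rw [if_neg]
        rintro ⟨e1, e2⟩
        have : k ∈ ({i, k0} : Finset (Fin n)) := by
          rw [← h1, ← e1]; simp
        rw [Finset.mem_insert, Finset.mem_singleton] at this
        rcases this with h' | h'
        · rw [Finset.mem_sdiff, Finset.mem_insert] at hk
          exact hk.2 (Or.inl h')
        · exact hkk0 h'
    rw [hsum2, Matrix.one_apply_ne hABne, zero_add]
    exact key_val ξ hij (Ne.symm hk0i) (Ne.symm hk0j) hab hcd h1 h2
  · have hsum0 : (∑ k ∈ Finset.univ \ ({i, j} : Finset (Fin n)),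
        if (({i, k} : Finset (Fin n)) = {a, b} ∧ ({j, k} : Finset (Fin n)) = {c, d}) then
          (if (k < i ↔ k < j) then ξ else -ξ) else 0) = 0 := by
      refine Finset.sum_eq_zero (fun k hk => ?_)
      rw [if_neg]
      rintro ⟨e1, e2⟩
      rw [Finset.mem_sdiff, Finset.mem_insert, Finset.mem_singleton] at hk
      exact hex ⟨k, fun h => hk.2 (Or.inl h), fun h => hk.2 (Or.inr h), e1.symm, e2.symm⟩
    rw [hsum0, add_zero]
    by_cases hABeq : A = B
    · subst hABeq
      obtain ⟨hac, hbd⟩ := pair_eq_sorted hab hcd (hA.symm.trans hB)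
      rw [Matrix.one_apply_eq, ← hac, ← hbd]
      exact key_diag ξ hij hab.ne
    · rw [Matrix.one_apply_ne hABeq]
      refine key_zero ξ hij hab hcd ?_ hex
      intro h
      exact hABeq (Subtype.ext (hA.trans (h.trans hB.symm)))

/-- `∧²t_{i,j}(ξ) ∈ E^{n−2}(N,R)`: the exterior square of an elementary
transvection is a product of at most `n − 2` elementary transvections of `GL_N(R)`. -/
theorem stmt7 (R : Type*) [CommRing R] (n : ℕ) (hn : 3 ≤ n)
    (i j : Fin n) (hij : i ≠ j) (ξ : R) :
    ∃ L : List (Matrix (V n) (V n) R), L.length ≤ n - 2 ∧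
      (∀ f ∈ L, ∃ (S T : Finset (Fin n)) (ζ : R),
        S.card = 2 ∧ T.card = 2 ∧ S ≠ T ∧ f = transvN R n S T ζ) ∧
      wedge (1 + Matrix.single i j ξ) = L.prod := by
  classical
  refine ⟨(Finset.univ \ ({i, j} : Finset (Fin n))).toList.map
    (fun k => transvN R n {i, k} {j, k} (if (k < i ↔ k < j) then ξ else -ξ)), ?_, ?_, ?_⟩
  · rw [List.length_map, Finset.length_toList, Finset.card_sdiff_of_subset (Finset.subset_univ _),
      Finset.card_univ, Fintype.card_fin, Finset.card_pair hij]
  · intro f hf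
    rw [List.mem_map] at hf
    obtain ⟨k, hk, rfl⟩ := hf
    rw [Finset.mem_toList, Finset.mem_sdiff, Finset.mem_insert, Finset.mem_singleton] at hk
    have hik : i ≠ k := fun h => hk.2 (Or.inl h.symm)
    have hjk : j ≠ k := fun h => hk.2 (Or.inr h.symm)
    have hST : ({i, k} : Finset (Fin n)) ≠ {j, k} := by
      intro h
      have hm : j ∈ ({i, k} : Finset (Fin n)) := by rw [h]; simp
      rcases Finset.mem_insert.mp hm with h' | h'
      · exact hij h'.symm
      · exact hjk (Finset.mem_singleton.mp h')
    exact ⟨{i, k}, {j, k}, _, Finset.card_pair hik, Finset.card_pair hjk, hST, rfl⟩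
  · have hmap : ((Finset.univ \ ({i, j} : Finset (Fin n))).toList.map
        (fun k => transvN R n {i, k} {j, k} (if (k < i ↔ k < j) then ξ else -ξ)))
        = ((Finset.univ \ ({i, j} : Finset (Fin n))).toList.map
        (fun k => (1 : Matrix (V n) (V n) R) + EE R i j ξ k)) := by
      refine List.map_congr_left (fun k hk => ?_)
      rw [Finset.mem_toList, Finset.mem_sdiff, Finset.mem_insert, Finset.mem_singleton] at hk
      exact transvN_eq_s7 (fun h => hk.2 (Or.inl h.symm)) (fun h => hk.2 (Or.inr h.symm)) hij ξ
    rw [hmap, prod_one_add_EE, Finset.sum_map_toList, wedge_eq hij ξ]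
end Aux
end

section
/- Let R be a commutative ring, n ≥ 4, x ∈ GL_n(R), and set g = ∧²x. Then for every H ∈ ∧⁴[n] and all A, C ∈ ∧²[n]: if A ∩ C ≠ ∅ then a_{A,C}^H(g) = 0, and if A ∩ C = ∅ then a_{A,C}^H(g) = sign(A,C)·M_{A∪C}^H(x), where M_{A∪C}^H(x) is the 4×4 minor of x with rows A ∪ C and columns H. -/
open Finset MvPolynomial Matrix

section Aux
variable {R : Type*} [CommRing R] {n : ℕ}

/-- Construct an element of `V n` from two distinct elements. -/
def mk2 (a b : Fin n) (h : a ≠ b) : V n := ⟨{a, b}, Finset.card_pair h⟩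

lemma lo_mk2 {a b : Fin n} (h : a < b) : lo (mk2 a b h.ne) = a := by
  refine le_antisymm (Finset.min'_le _ a (by simp [mk2])) (Finset.le_min' _ _ _ ?_)
  intro y hy
  simp only [mk2, Finset.mem_insert, Finset.mem_singleton] at hy
  rcases hy with rfl | rfl
  · exact le_rfl
  · exact h.le

lemma hi_mk2 {a b : Fin n} (h : a < b) : hi (mk2 a b h.ne) = b := by
  refine le_antisymm (Finset.max'_le _ _ _ ?_) (Finset.le_max' _ b (by simp [mk2]))
  intro y hy
  simp only [mk2, Finset.mem_insert, Finset.mem_singleton] at hy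
  rcases hy with rfl | rfl
  · exact h.le
  · exact le_rfl

lemma lo_mem (I : V n) : lo I ∈ I.1 := Finset.min'_mem _ _
lemma hi_mem (I : V n) : hi I ∈ I.1 := Finset.max'_mem _ _

lemma wedge_mk2 (x : Matrix (Fin n) (Fin n) R) (A : V n) {a b : Fin n} (h : a < b) :
    wedge x A (mk2 a b h.ne) =
      x (lo A) a * x (hi A) b - x (lo A) b * x (hi A) a := by
  unfold wedge
  rw [lo_mk2 h, hi_mk2 h]

lemma signIJ_pair (a b c d : Fin n) (hab : a ≠ b) (hcd : c ≠ d) :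
    signIJ ({a, b} : Finset (Fin n)) {c, d} =
      (-1) ^ (((if c < a then 1 else 0) + (if d < a then 1 else 0)) +
        ((if c < b then 1 else 0) + (if d < b then 1 else 0))) := by
  unfold signIJ
  congr 1
  have h := Finset.natCast_card_filter (R := ℕ)
    (fun p : Fin n × Fin n => p.2 < p.1) (({a, b} : Finset (Fin n)) ×ˢ {c, d})
  rw [Nat.cast_id] at h
  rw [h, Finset.sum_product, Finset.sum_pair hab, Finset.sum_pair hcd, Finset.sum_pair hcd]

lemma pair_ne_left {a b c d : Fin n} (h1 : a ≠ c) (h2 : a ≠ d) :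
    ({a, b} : Finset (Fin n)) ≠ {c, d} := by
  intro h
  have : a ∈ ({c, d} : Finset (Fin n)) := h ▸ Finset.mem_insert_self a {b}
  simp only [Finset.mem_insert, Finset.mem_singleton] at this
  exact this.elim h1 h2

lemma pair_ne_right {a b c d : Fin n} (h1 : b ≠ c) (h2 : b ≠ d) :
    ({a, b} : Finset (Fin n)) ≠ {c, d} := by
  rw [Finset.pair_comm]; exact pair_ne_left h1 h2

set_option maxHeartbeats 1000000 in
lemma laplace4 (M : Matrix (Fin 4) (Fin 4) R) :
    M.det =
      (M 0 0 * M 1 1 - M 0 1 * M 1 0) * (M 2 2 * M 3 3 - M 2 3 * M 3 2)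
      - (M 0 0 * M 1 2 - M 0 2 * M 1 0) * (M 2 1 * M 3 3 - M 2 3 * M 3 1)
      + (M 0 0 * M 1 3 - M 0 3 * M 1 0) * (M 2 1 * M 3 2 - M 2 2 * M 3 1)
      + (M 0 1 * M 1 2 - M 0 2 * M 1 1) * (M 2 0 * M 3 3 - M 2 3 * M 3 0)
      - (M 0 1 * M 1 3 - M 0 3 * M 1 1) * (M 2 0 * M 3 2 - M 2 2 * M 3 0)
      + (M 0 2 * M 1 3 - M 0 3 * M 1 2) * (M 2 0 * M 3 1 - M 2 1 * M 3 0) := by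
  rw [Matrix.det_succ_row_zero]
  simp (config := {decide := true}) [Fin.sum_univ_succ, Matrix.det_fin_three,
    Matrix.submatrix_apply, Fin.succAbove,
    show (Fin.succ 2 : Fin 4) = 3 from rfl, show (Fin.castSucc 2 : Fin 4) = 2 from rfl,
    show (Fin.succ 1 : Fin 4) = 2 from rfl, show (Fin.castSucc 1 : Fin 4) = 1 from rfl,
    show (Fin.succ 0 : Fin 4) = 1 from rfl, show (Fin.castSucc 0 : Fin 4) = 0 from rfl]
  ring

lemma strictMono4 {w x y z : Fin n} (h1 : w < x) (h2 : x < y) (h3 : y < z) :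
    StrictMono ![w, x, y, z] := by
  rw [Fin.strictMono_iff_lt_succ]
  intro i
  fin_cases i <;> simpa

end Aux
section Six
variable {R : Type*} [CommRing R] {n : ℕ}

lemma img_pair (e : Fin 4 → Fin n) (i j : Fin 4) :
    Finset.image e {i, j} = {e i, e j} := by simp

lemma pair_inter_empty (e : Fin 4 → Fin n) (hinj : Function.Injective e)
    {a b c d : Fin 4} (h : ({a, b} : Finset (Fin 4)) ∩ {c, d} = ∅) :
    ({e a, e b} : Finset (Fin n)) ∩ {e c, e d} = ∅ := by
  rw [← img_pair, ← img_pair, ← Finset.image_inter _ _ hinj, h, Finset.image_empty]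

lemma pair_union_univ (e : Fin 4 → Fin n)
    {a b c d : Fin 4} (h : ({a, b} : Finset (Fin 4)) ∪ {c, d} = Finset.univ) :
    ({e a, e b} : Finset (Fin n)) ∪ {e c, e d} = Finset.image e Finset.univ := by
  rw [← img_pair, ← img_pair, ← Finset.image_union, h]

/-- The six ordered pairs `(B, D)` of disjoint 2-subsets with union `image e univ`. -/
def sixPairs (e : Fin 4 → Fin n) (he : StrictMono e) : Finset (V n × V n) :=
  {(mk2 (e 0) (e 1) (he.injective.ne (show (0 : Fin 4) ≠ 1 by decide)),
    mk2 (e 2) (e 3) (he.injective.ne (show (2 : Fin 4) ≠ 3 by decide))),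
   (mk2 (e 0) (e 2) (he.injective.ne (show (0 : Fin 4) ≠ 2 by decide)),
    mk2 (e 1) (e 3) (he.injective.ne (show (1 : Fin 4) ≠ 3 by decide))),
   (mk2 (e 0) (e 3) (he.injective.ne (show (0 : Fin 4) ≠ 3 by decide)),
    mk2 (e 1) (e 2) (he.injective.ne (show (1 : Fin 4) ≠ 2 by decide))),
   (mk2 (e 1) (e 2) (he.injective.ne (show (1 : Fin 4) ≠ 2 by decide)),
    mk2 (e 0) (e 3) (he.injective.ne (show (0 : Fin 4) ≠ 3 by decide))),
   (mk2 (e 1) (e 3) (he.injective.ne (show (1 : Fin 4) ≠ 3 by decide)),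
    mk2 (e 0) (e 2) (he.injective.ne (show (0 : Fin 4) ≠ 2 by decide))),
   (mk2 (e 2) (e 3) (he.injective.ne (show (2 : Fin 4) ≠ 3 by decide)),
    mk2 (e 0) (e 1) (he.injective.ne (show (0 : Fin 4) ≠ 1 by decide)))}

lemma six_cond (e : Fin 4 → Fin n) (he : StrictMono e) :
    ∀ p ∈ sixPairs e he, p.1.1 ∩ p.2.1 = ∅ ∧
      p.1.1 ∪ p.2.1 = Finset.image e Finset.univ := by
  intro p hp
  simp only [sixPairs, Finset.mem_insert, Finset.mem_singleton] at hp
  rcases hp with rfl | rfl | rfl | rfl | rfl | rfl <;>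
    exact ⟨pair_inter_empty e he.injective (by decide), pair_union_univ e (by decide)⟩

lemma cond_mem_sixPairs (e : Fin 4 → Fin n) (he : StrictMono e) (B D : V n)
    (h1 : B.1 ∩ D.1 = ∅) (h2 : B.1 ∪ D.1 = Finset.image e Finset.univ) :
    (B, D) ∈ sixPairs e he := by
  classical
  have hinj := he.injective
  have hBsub : B.1 ⊆ Finset.image e Finset.univ := h2 ▸ Finset.subset_union_left
  set b : Finset (Fin 4) := Finset.univ.filter (fun i => e i ∈ B.1) with hbdef
  have hBimg : Finset.image e b = B.1 := by
    ext t
    simp only [hbdef, Finset.mem_image, Finset.mem_filter, Finset.mem_univ, true_and]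
    constructor
    · rintro ⟨i, hi, rfl⟩; exact hi
    · intro ht
      obtain ⟨i, -, rfl⟩ := Finset.mem_image.mp (hBsub ht)
      exact ⟨i, ht, rfl⟩
  have hbcard : b.card = 2 := by
    have hc := Finset.card_image_of_injective b hinj
    rw [hBimg, B.2] at hc
    omega
  have hDimg : Finset.image e bᶜ = D.1 := by
    have hD : D.1 = Finset.image e Finset.univ \ B.1 := by
      rw [← h2]
      exact (Finset.union_sdiff_cancel_left
        (Finset.disjoint_iff_inter_eq_empty.mpr h1)).symm
    rw [hD, ← hBimg, Finset.compl_eq_univ_sdiff, Finset.image_sdiff _ _ hinj]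
  have key' : ∀ c : Finset (Fin 4), c.card = 2 →
      (c = {0,1} ∨ c = {0,2} ∨ c = {0,3} ∨ c = {1,2} ∨ c = {1,3} ∨ c = {2,3}) := by decide
  simp only [sixPairs, Finset.mem_insert, Finset.mem_singleton, Prod.mk.injEq]
  rcases key' b hbcard with h | h | h | h | h | h
  · exact Or.inl ⟨Subtype.ext (by rw [← hBimg, h]; simp [mk2]),
      Subtype.ext (by rw [← hDimg, h, show ({0,1} : Finset (Fin 4))ᶜ = {2,3} from by decide]; simp [mk2])⟩
  · exact Or.inr <| Or.inl ⟨Subtype.ext (by rw [← hBimg, h]; simp [mk2]),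
      Subtype.ext (by rw [← hDimg, h, show ({0,2} : Finset (Fin 4))ᶜ = {1,3} from by decide]; simp [mk2])⟩
  · exact Or.inr <| Or.inr <| Or.inl ⟨Subtype.ext (by rw [← hBimg, h]; simp [mk2]),
      Subtype.ext (by rw [← hDimg, h, show ({0,3} : Finset (Fin 4))ᶜ = {1,2} from by decide]; simp [mk2])⟩
  · exact Or.inr <| Or.inr <| Or.inr <| Or.inl ⟨Subtype.ext (by rw [← hBimg, h]; simp [mk2]),
      Subtype.ext (by rw [← hDimg, h, show ({1,2} : Finset (Fin 4))ᶜ = {0,3} from by decide]; simp [mk2])⟩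
  · exact Or.inr <| Or.inr <| Or.inr <| Or.inr <| Or.inl ⟨Subtype.ext (by rw [← hBimg, h]; simp [mk2]),
      Subtype.ext (by rw [← hDimg, h, show ({1,3} : Finset (Fin 4))ᶜ = {0,2} from by decide]; simp [mk2])⟩
  · exact Or.inr <| Or.inr <| Or.inr <| Or.inr <| Or.inr ⟨Subtype.ext (by rw [← hBimg, h]; simp [mk2]),
      Subtype.ext (by rw [← hDimg, h, show ({2,3} : Finset (Fin 4))ᶜ = {0,1} from by decide]; simp [mk2])⟩

lemma extNum_six (g : Matrix (V n) (V n) R) (e : Fin 4 → Fin n) (he : StrictMono e)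
    (A C : V n) :
    extNum g (Finset.image e Finset.univ) A C =
      ∑ p ∈ sixPairs e he, (signIJ p.1.1 p.2.1 : R) * (g A p.1 * g C p.2) := by
  classical
  unfold extNum
  rw [← Finset.sum_product']
  rw [← Finset.sum_subset (fun p _ => Finset.mem_product.mpr ⟨Finset.mem_univ _, Finset.mem_univ _⟩ :
        sixPairs e he ⊆ Finset.univ ×ˢ Finset.univ)
      (fun p _ hp => if_neg (fun hc => hp (cond_mem_sixPairs e he p.1 p.2 hc.1 hc.2)))]
  exact Finset.sum_congr rfl fun p hp => if_pos (six_cond e he p hp)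

end Six
section WedgeDet
variable {R : Type*} [CommRing R] {n : ℕ}

set_option maxHeartbeats 3200000 in
lemma extNum_wedge (x : Matrix (Fin n) (Fin n) R) (e : Fin 4 → Fin n) (he : StrictMono e)
    (A C : V n) :
    extNum (wedge x) (Finset.image e Finset.univ) A C =
      Matrix.det (Matrix.of fun i j : Fin 4 =>
        x (![lo A, hi A, lo C, hi C] i) (e j)) := by
  have h01 : e 0 < e 1 := he (by decide)
  have h02 : e 0 < e 2 := he (by decide)
  have h03 : e 0 < e 3 := he (by decide)
  have h12 : e 1 < e 2 := he (by decide)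
  have h13 : e 1 < e 3 := he (by decide)
  have h23 : e 2 < e 3 := he (by decide)
  have n10 : ¬ e 1 < e 0 := asymm h01
  have n20 : ¬ e 2 < e 0 := asymm h02
  have n30 : ¬ e 3 < e 0 := asymm h03
  have n21 : ¬ e 2 < e 1 := asymm h12
  have n31 : ¬ e 3 < e 1 := asymm h13
  have n32 : ¬ e 3 < e 2 := asymm h23
  have key2 : ∀ {a b c d : Fin 4},
      ({e a, e b} : Finset (Fin n)) = {e c, e d} → ({a, b} : Finset (Fin 4)) = {c, d} := by
    intro a b c d hval
    rw [← img_pair e, ← img_pair e] at hval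
    exact Finset.image_injective he.injective hval
  rw [extNum_six (wedge x) e he A C]
  rw [show sixPairs e he =
    insert (mk2 (e 0) (e 1) (he.injective.ne (show (0 : Fin 4) ≠ 1 by decide)),
      mk2 (e 2) (e 3) (he.injective.ne (show (2 : Fin 4) ≠ 3 by decide)))
    (insert (mk2 (e 0) (e 2) (he.injective.ne (show (0 : Fin 4) ≠ 2 by decide)),
      mk2 (e 1) (e 3) (he.injective.ne (show (1 : Fin 4) ≠ 3 by decide)))
    (insert (mk2 (e 0) (e 3) (he.injective.ne (show (0 : Fin 4) ≠ 3 by decide)),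
      mk2 (e 1) (e 2) (he.injective.ne (show (1 : Fin 4) ≠ 2 by decide)))
    (insert (mk2 (e 1) (e 2) (he.injective.ne (show (1 : Fin 4) ≠ 2 by decide)),
      mk2 (e 0) (e 3) (he.injective.ne (show (0 : Fin 4) ≠ 3 by decide)))
    (insert (mk2 (e 1) (e 3) (he.injective.ne (show (1 : Fin 4) ≠ 3 by decide)),
      mk2 (e 0) (e 2) (he.injective.ne (show (0 : Fin 4) ≠ 2 by decide)))
    ({(mk2 (e 2) (e 3) (he.injective.ne (show (2 : Fin 4) ≠ 3 by decide)),
      mk2 (e 0) (e 1) (he.injective.ne (show (0 : Fin 4) ≠ 1 by decide)))}))))) from rfl]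
  rw [Finset.sum_insert (by
        simp only [Finset.mem_insert, Finset.mem_singleton]
        rintro (h | h | h | h | h) <;>
          exact absurd (key2 (congrArg Subtype.val (Prod.ext_iff.mp h).1)) (by decide)),
      Finset.sum_insert (by
        simp only [Finset.mem_insert, Finset.mem_singleton]
        rintro (h | h | h | h) <;>
          exact absurd (key2 (congrArg Subtype.val (Prod.ext_iff.mp h).1)) (by decide)),
      Finset.sum_insert (by
        simp only [Finset.mem_insert, Finset.mem_singleton]
        rintro (h | h | h) <;>
          exact absurd (key2 (congrArg Subtype.val (Prod.ext_iff.mp h).1)) (by decide)),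
      Finset.sum_insert (by
        simp only [Finset.mem_insert, Finset.mem_singleton]
        rintro (h | h) <;>
          exact absurd (key2 (congrArg Subtype.val (Prod.ext_iff.mp h).1)) (by decide)),
      Finset.sum_insert (by
        simp only [Finset.mem_singleton]
        intro h
        exact absurd (key2 (congrArg Subtype.val (Prod.ext_iff.mp h).1)) (by decide)),
      Finset.sum_singleton]
  rw [wedge_mk2 x A h01, wedge_mk2 x C h23, wedge_mk2 x A h02, wedge_mk2 x C h13,
      wedge_mk2 x A h03, wedge_mk2 x C h12, wedge_mk2 x A h12, wedge_mk2 x C h03,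
      wedge_mk2 x A h13, wedge_mk2 x C h02, wedge_mk2 x A h23, wedge_mk2 x C h01]
  simp only [mk2]
  rw [signIJ_pair (e 0) (e 1) (e 2) (e 3) h01.ne h23.ne,
      signIJ_pair (e 0) (e 2) (e 1) (e 3) h02.ne h13.ne,
      signIJ_pair (e 0) (e 3) (e 1) (e 2) h03.ne h12.ne,
      signIJ_pair (e 1) (e 2) (e 0) (e 3) h12.ne h03.ne,
      signIJ_pair (e 1) (e 3) (e 0) (e 2) h13.ne h02.ne,
      signIJ_pair (e 2) (e 3) (e 0) (e 1) h23.ne h01.ne]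
  simp only [h01, h02, h03, h12, h13, h23, n10, n20, n30, n21, n31, n32,
    if_true, if_false, ite_true, ite_false, if_pos, if_neg]
  rw [laplace4]
  have v0 : (![lo A, hi A, lo C, hi C] : Fin 4 → Fin n) 0 = lo A := rfl
  have v1 : (![lo A, hi A, lo C, hi C] : Fin 4 → Fin n) 1 = hi A := rfl
  have v2 : (![lo A, hi A, lo C, hi C] : Fin 4 → Fin n) 2 = lo C := rfl
  have v3 : (![lo A, hi A, lo C, hi C] : Fin 4 → Fin n) 3 = hi C := rfl
  simp only [Matrix.of_apply, v0, v1, v2, v3]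
  push_cast
  ring

end WedgeDet
section Final
variable {R : Type*} [CommRing R] {n : ℕ}

lemma image_orderEmbOfFin (H : Finset (Fin n)) (hH : H.card = 4) :
    Finset.image (⇑(H.orderEmbOfFin hH)) Finset.univ = H := by
  ext t
  simp only [Finset.mem_image, Finset.mem_univ, true_and]
  constructor
  · rintro ⟨i, rfl⟩; exact Finset.orderEmbOfFin_mem H hH i
  · intro ht
    have h2 : t ∈ Set.range ⇑(H.orderEmbOfFin hH) := by
      rw [Finset.range_orderEmbOfFin]; exact ht
    exact h2

end Final

set_option maxHeartbeats 3200000 in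
/-- for `g = ∧²x` with `x ∈ GL_n(R)`, the exterior numbers vanish for
intersecting `A, C` and equal the signed 4×4 minors `sign(A,C)·M_{A∪C}^H(x)` for
disjoint `A, C`. -/
theorem stmt8 (R : Type*) [CommRing R] (n : ℕ) (hn : 4 ≤ n)
    (x : Matrix.GeneralLinearGroup (Fin n) R)
    (H : Finset (Fin n)) (hH : H.card = 4) (A C : V n) :
    (¬ Disjoint A.1 C.1 →
      extNum (wedge (x : Matrix (Fin n) (Fin n) R)) H A C = 0) ∧
    (Disjoint A.1 C.1 →
      extNum (wedge (x : Matrix (Fin n) (Fin n) R)) H A C =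
        (signIJ A.1 C.1 : R) * minor4 (x : Matrix (Fin n) (Fin n) R) (A.1 ∪ C.1) H) := by
  set xm : Matrix (Fin n) (Fin n) R := (x : Matrix (Fin n) (Fin n) R) with hxm
  set e : Fin 4 → Fin n := ⇑(H.orderEmbOfFin hH) with hedef
  have he : StrictMono e := (H.orderEmbOfFin hH).strictMono
  have hHimg : Finset.image e Finset.univ = H := image_orderEmbOfFin H hH
  have V0 : ∀ w y z u : Fin n, (![w, y, z, u] : Fin 4 → Fin n) 0 = w := fun _ _ _ _ => rfl
  have V1 : ∀ w y z u : Fin n, (![w, y, z, u] : Fin 4 → Fin n) 1 = y := fun _ _ _ _ => rfl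
  have V2 : ∀ w y z u : Fin n, (![w, y, z, u] : Fin 4 → Fin n) 2 = z := fun _ _ _ _ => rfl
  have V3 : ∀ w y z u : Fin n, (![w, y, z, u] : Fin 4 → Fin n) 3 = u := fun _ _ _ _ => rfl
  have hmain := extNum_wedge xm e he A C
  rw [hHimg] at hmain
  have hA : lo A < hi A := lo_lt_hi A
  have hC : lo C < hi C := lo_lt_hi C
  constructor
  · intro hnd
    rw [hmain]
    rw [Finset.not_disjoint_iff] at hnd
    obtain ⟨t, htA, htC⟩ := hnd
    rw [eq_pair A] at htA
    rw [eq_pair C] at htC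
    simp only [Finset.mem_insert, Finset.mem_singleton] at htA htC
    rcases htA with rfl | rfl <;> rcases htC with h | h
    · exact Matrix.det_zero_of_row_eq (show (0 : Fin 4) ≠ 2 by decide)
        (by funext j; simp only [Matrix.of_apply, V0, V2, h])
    · exact Matrix.det_zero_of_row_eq (show (0 : Fin 4) ≠ 3 by decide)
        (by funext j; simp only [Matrix.of_apply, V0, V3, h])
    · exact Matrix.det_zero_of_row_eq (show (1 : Fin 4) ≠ 2 by decide)
        (by funext j; simp only [Matrix.of_apply, V1, V2, h])
    · exact Matrix.det_zero_of_row_eq (show (1 : Fin 4) ≠ 3 by decide)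
        (by funext j; simp only [Matrix.of_apply, V1, V3, h])
  · intro hd
    have h4 : (A.1 ∪ C.1).card = 4 := by
      rw [Finset.card_union_of_disjoint hd, A.2, C.2]
    have dAC : ∀ {u v : Fin n}, u ∈ A.1 → v ∈ C.1 → u ≠ v :=
      fun hu hv hcon => (Finset.disjoint_left.mp hd hu) (hcon ▸ hv)
    rw [hmain]
    unfold minor4
    rw [dif_pos (⟨h4, hH⟩ : (A.1 ∪ C.1).card = 4 ∧ H.card = 4)]
    simp only [Finset.coe_orderIsoOfFin_apply]
    have hcol : ∀ (pf : H.card = 4) (j : Fin 4), H.orderEmbOfFin pf j = e j :=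
      fun pf j => rfl
    have hmem : ∀ i : Fin 4, (![lo A, hi A, lo C, hi C] : Fin 4 → Fin n) i ∈ A.1 ∪ C.1 := by
      intro i
      fin_cases i
      · exact Finset.mem_union_left _ (lo_mem A)
      · exact Finset.mem_union_left _ (hi_mem A)
      · exact Finset.mem_union_right _ (lo_mem C)
      · exact Finset.mem_union_right _ (hi_mem C)
    have hmemP : ∀ (w y z u : Fin n), w ∈ A.1 ∪ C.1 → y ∈ A.1 ∪ C.1 → z ∈ A.1 ∪ C.1 →
        u ∈ A.1 ∪ C.1 → ∀ i : Fin 4, (![w, y, z, u] : Fin 4 → Fin n) i ∈ A.1 ∪ C.1 := by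
      intro w y z u h1 h2 h3 h4 i
      fin_cases i <;> assumption
    have mA : lo A ∈ A.1 ∪ C.1 := Finset.mem_union_left _ (lo_mem A)
    have mB : hi A ∈ A.1 ∪ C.1 := Finset.mem_union_left _ (hi_mem A)
    have mC : lo C ∈ A.1 ∪ C.1 := Finset.mem_union_right _ (lo_mem C)
    have mD : hi C ∈ A.1 ∪ C.1 := Finset.mem_union_right _ (hi_mem C)
    have hsgn := signIJ_pair (lo A) (hi A) (lo C) (hi C) hA.ne hC.ne
    rw [← eq_pair A, ← eq_pair C] at hsgn
    rcases lt_or_gt_of_ne (dAC (lo_mem A) (lo_mem C)) with h1 | h1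
    · rcases lt_or_gt_of_ne ((dAC (hi_mem A) (lo_mem C)).symm) with h2 | h2
      · rcases lt_or_gt_of_ne ((dAC (hi_mem A) (hi_mem C)).symm) with h3 | h3
        · -- lo A < lo C < hi C < hi A
          have hrow : ∀ (pf : (A.1 ∪ C.1).card = 4) (i : Fin 4),
              (A.1 ∪ C.1).orderEmbOfFin pf i = (![lo A, lo C, hi C, hi A] : Fin 4 → Fin n) i :=
            fun pf i => (congrFun (Finset.orderEmbOfFin_unique pf
              (hmemP _ _ _ _ mA mC mD mB) (strictMono4 h1 hC h3)) i).symm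
          have hsign : signIJ A.1 C.1 = 1 := by
            rw [hsgn, if_neg (asymm h1), if_neg (asymm (h1.trans hC)), if_pos h2, if_pos h3]
            norm_num
          rw [hsign]
          simp only [hrow, hcol, Matrix.of_apply]
          simp only [laplace4]
          simp only [Matrix.of_apply, V0, V1, V2, V3]
          push_cast
          ring
        · -- lo A < lo C < hi A < hi C
          have hrow : ∀ (pf : (A.1 ∪ C.1).card = 4) (i : Fin 4),
              (A.1 ∪ C.1).orderEmbOfFin pf i = (![lo A, lo C, hi A, hi C] : Fin 4 → Fin n) i :=
            fun pf i => (congrFun (Finset.orderEmbOfFin_unique pf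
              (hmemP _ _ _ _ mA mC mB mD) (strictMono4 h1 h2 h3)) i).symm
          have hsign : signIJ A.1 C.1 = -1 := by
            rw [hsgn, if_neg (asymm h1), if_neg (asymm (h1.trans (h2.trans h3))),
              if_pos h2, if_neg (asymm h3)]
            norm_num
          rw [hsign]
          simp only [hrow, hcol, Matrix.of_apply]
          simp only [laplace4]
          simp only [Matrix.of_apply, V0, V1, V2, V3]
          push_cast
          ring
      · -- lo A < hi A < lo C < hi C
        have hrow : ∀ (pf : (A.1 ∪ C.1).card = 4) (i : Fin 4),
            (A.1 ∪ C.1).orderEmbOfFin pf i = (![lo A, hi A, lo C, hi C] : Fin 4 → Fin n) i :=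
          fun pf i => (congrFun (Finset.orderEmbOfFin_unique pf
            (hmemP _ _ _ _ mA mB mC mD) (strictMono4 hA h2 hC)) i).symm
        have hsign : signIJ A.1 C.1 = 1 := by
          rw [hsgn, if_neg (asymm h1), if_neg (asymm (h1.trans hC)),
            if_neg (asymm h2), if_neg (asymm (h2.trans hC))]
          norm_num
        rw [hsign]
        simp only [hrow, hcol, Matrix.of_apply]
        simp only [laplace4]
        simp only [Matrix.of_apply, V0, V1, V2, V3]
        push_cast
        ring
    · rcases lt_or_gt_of_ne (dAC (lo_mem A) (hi_mem C)) with h2 | h2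
      · rcases lt_or_gt_of_ne ((dAC (hi_mem A) (hi_mem C)).symm) with h3 | h3
        · -- lo C < lo A < hi C < hi A
          have hrow : ∀ (pf : (A.1 ∪ C.1).card = 4) (i : Fin 4),
              (A.1 ∪ C.1).orderEmbOfFin pf i = (![lo C, lo A, hi C, hi A] : Fin 4 → Fin n) i :=
            fun pf i => (congrFun (Finset.orderEmbOfFin_unique pf
              (hmemP _ _ _ _ mC mA mD mB) (strictMono4 h1 h2 h3)) i).symm
          have hsign : signIJ A.1 C.1 = -1 := by
            rw [hsgn, if_pos h1, if_neg (asymm h2), if_pos (h1.trans hA), if_pos h3]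
            norm_num
          rw [hsign]
          simp only [hrow, hcol, Matrix.of_apply]
          simp only [laplace4]
          simp only [Matrix.of_apply, V0, V1, V2, V3]
          push_cast
          ring
        · -- lo C < lo A < hi A < hi C
          have hrow : ∀ (pf : (A.1 ∪ C.1).card = 4) (i : Fin 4),
              (A.1 ∪ C.1).orderEmbOfFin pf i = (![lo C, lo A, hi A, hi C] : Fin 4 → Fin n) i :=
            fun pf i => (congrFun (Finset.orderEmbOfFin_unique pf
              (hmemP _ _ _ _ mC mA mB mD) (strictMono4 h1 hA h3)) i).symm
          have hsign : signIJ A.1 C.1 = 1 := by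
            rw [hsgn, if_pos h1, if_neg (asymm h2), if_pos (h1.trans hA), if_neg (asymm h3)]
            norm_num
          rw [hsign]
          simp only [hrow, hcol, Matrix.of_apply]
          simp only [laplace4]
          simp only [Matrix.of_apply, V0, V1, V2, V3]
          push_cast
          ring
      · -- lo C < hi C < lo A < hi A
        have hrow : ∀ (pf : (A.1 ∪ C.1).card = 4) (i : Fin 4),
            (A.1 ∪ C.1).orderEmbOfFin pf i = (![lo C, hi C, lo A, hi A] : Fin 4 → Fin n) i :=
          fun pf i => (congrFun (Finset.orderEmbOfFin_unique pf
            (hmemP _ _ _ _ mC mD mA mB) (strictMono4 hC h2 hA)) i).symm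
        have hsign : signIJ A.1 C.1 = 1 := by
          rw [hsgn, if_pos h1, if_pos h2, if_pos (h1.trans hA), if_pos (h2.trans hA)]
          norm_num
        rw [hsign]
        simp only [hrow, hcol, Matrix.of_apply]
        simp only [laplace4]
        simp only [Matrix.of_apply, V0, V1, V2, V3]
        push_cast
        ring
end

section
/- Let R be a commutative ring, n ≥ 4, and let g, h be N×N matrices over R indexed by ∧²[n] that both satisfy the exterior-number conditions, with witnesses θ_g and θ_h respectively. Then for every H ∈ ∧⁴[n] and all disjoint A, C ∈ ∧²[n]: a_{A,C}^H(g·h) = sign(A,C) · Σ_{I ∈ ∧⁴[n]} θ_h(I, H) · θ_g(A∪C, I). -/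
open Finset MvPolynomial Matrix

-- Auxiliary: reorder a fourfold sum over a fintype.
lemma sum4_comm {β : Type*} [Fintype β] {M : Type*} [AddCommMonoid M]
    (f : β → β → β → β → M) :
    ∑ b : β, ∑ d : β, ∑ m : β, ∑ l : β, f b d m l
      = ∑ m : β, ∑ l : β, ∑ b : β, ∑ d : β, f b d m l := by
  calc ∑ b : β, ∑ d : β, ∑ m : β, ∑ l : β, f b d m l
      = ∑ b : β, ∑ m : β, ∑ d : β, ∑ l : β, f b d m l :=
        Finset.sum_congr rfl fun b _ => Finset.sum_comm
    _ = ∑ m : β, ∑ b : β, ∑ d : β, ∑ l : β, f b d m l := Finset.sum_comm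
    _ = ∑ m : β, ∑ b : β, ∑ l : β, ∑ d : β, f b d m l :=
        Finset.sum_congr rfl fun m _ =>
          Finset.sum_congr rfl fun b _ => Finset.sum_comm
    _ = ∑ m : β, ∑ l : β, ∑ b : β, ∑ d : β, f b d m l :=
        Finset.sum_congr rfl fun m _ => Finset.sum_comm

-- Auxiliary: reorder a triple sum.
lemma sum3_comm {β γ : Type*} [Fintype β] (s : Finset γ) {M : Type*}
    [AddCommMonoid M] (f : γ → β → β → M) :
    ∑ i ∈ s, ∑ b : β, ∑ d : β, f i b d
      = ∑ b : β, ∑ d : β, ∑ i ∈ s, f i b d := by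
  calc ∑ i ∈ s, ∑ b : β, ∑ d : β, f i b d
      = ∑ b : β, ∑ i ∈ s, ∑ d : β, f i b d := Finset.sum_comm
    _ = ∑ b : β, ∑ d : β, ∑ i ∈ s, f i b d :=
        Finset.sum_congr rfl fun b _ => Finset.sum_comm

/-- multiplicativity of exterior numbers: if `g` and `h` satisfy the
exterior-number conditions with witnesses `θg`, `θh`, then
`a_{A,C}^H(g·h) = sign(A,C) · Σ_{I ∈ ∧⁴[n]} θh(I,H)·θg(A∪C,I)`. -/
theorem stmt12 (R : Type*) [CommRing R] (n : ℕ) (hn : 4 ≤ n)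
    (g h : Matrix (V n) (V n) R) (θg θh : Finset (Fin n) → Finset (Fin n) → R)
    (hg : extCond g θg) (hh : extCond h θh) :
    ∀ H : Finset (Fin n), H.card = 4 → ∀ A C : V n, Disjoint A.1 C.1 →
      extNum (g * h) H A C =
        (signIJ A.1 C.1 : R) *
          ∑ I ∈ Finset.univ.filter (fun I : Finset (Fin n) => I.card = 4),
            θh I H * θg (A.1 ∪ C.1) I := by
  intro H hH A C hAC
  -- Step 1: expand the matrix product
  have key : extNum (g * h) H A C = ∑ M : V n, ∑ L : V n,
      g A M * g C L * extNum h H M L := by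
    unfold extNum
    calc (∑ B : V n, ∑ D : V n,
            if B.1 ∩ D.1 = ∅ ∧ B.1 ∪ D.1 = H then
              (signIJ B.1 D.1 : R) * ((g * h) A B * (g * h) C D) else 0)
        = ∑ B : V n, ∑ D : V n, ∑ M : V n, ∑ L : V n,
            (if B.1 ∩ D.1 = ∅ ∧ B.1 ∪ D.1 = H then
              (signIJ B.1 D.1 : R) * (g A M * h M B * (g C L * h L D)) else 0) := by
          refine Finset.sum_congr rfl fun B _ => Finset.sum_congr rfl fun D _ => ?_
          by_cases hP : B.1 ∩ D.1 = ∅ ∧ B.1 ∪ D.1 = H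
          · rw [if_pos hP]
            simp only [Matrix.mul_apply, Finset.sum_mul_sum]
            rw [Finset.mul_sum]
            refine Finset.sum_congr rfl fun M' _ => ?_
            rw [Finset.mul_sum]
            exact Finset.sum_congr rfl fun L' _ => by rw [if_pos hP]
          · simp only [if_neg hP, Finset.sum_const_zero]
      _ = ∑ M : V n, ∑ L : V n, ∑ B : V n, ∑ D : V n,
            (if B.1 ∩ D.1 = ∅ ∧ B.1 ∪ D.1 = H then
              (signIJ B.1 D.1 : R) * (g A M * h M B * (g C L * h L D)) else 0) :=
          sum4_comm _
      _ = ∑ M : V n, ∑ L : V n, g A M * g C L * ∑ B : V n, ∑ D : V n,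
            (if B.1 ∩ D.1 = ∅ ∧ B.1 ∪ D.1 = H then
              (signIJ B.1 D.1 : R) * (h M B * h L D) else 0) := by
          refine Finset.sum_congr rfl fun M _ => Finset.sum_congr rfl fun L _ => ?_
          simp only [Finset.mul_sum, mul_ite, mul_zero]
          refine Finset.sum_congr rfl fun B _ => Finset.sum_congr rfl fun D _ => ?_
          split_ifs <;> ring
  rw [key]
  -- Step 2: use the exterior-number conditions of h
  have step2 : ∀ M L : V n, g A M * g C L * extNum h H M L =
      if M.1 ∩ L.1 = ∅ then
        (signIJ M.1 L.1 : R) * θh (M.1 ∪ L.1) H * (g A M * g C L) else 0 := by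
    intro M L
    by_cases hd : Disjoint M.1 L.1
    · rw [if_pos (Finset.disjoint_iff_inter_eq_empty.mp hd), (hh H hH M L).2 hd]; ring
    · rw [if_neg (fun he => hd (Finset.disjoint_iff_inter_eq_empty.mpr he)),
        (hh H hH M L).1 hd]; ring
  simp only [step2]
  -- Step 3: regroup by I = M ∪ L
  have step3 : (∑ M : V n, ∑ L : V n,
      if M.1 ∩ L.1 = ∅ then
        (signIJ M.1 L.1 : R) * θh (M.1 ∪ L.1) H * (g A M * g C L) else 0) =
      ∑ I ∈ Finset.univ.filter (fun I : Finset (Fin n) => I.card = 4),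
        θh I H * extNum g I A C := by
    unfold extNum
    calc (∑ M : V n, ∑ L : V n,
            if M.1 ∩ L.1 = ∅ then
              (signIJ M.1 L.1 : R) * θh (M.1 ∪ L.1) H * (g A M * g C L) else 0)
        = ∑ M : V n, ∑ L : V n,
            ∑ I ∈ Finset.univ.filter (fun I : Finset (Fin n) => I.card = 4),
              (if M.1 ∩ L.1 = ∅ ∧ M.1 ∪ L.1 = I then
                θh I H * ((signIJ M.1 L.1 : R) * (g A M * g C L)) else 0) := by
          refine Finset.sum_congr rfl fun M _ => Finset.sum_congr rfl fun L _ => ?_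
          by_cases hd : M.1 ∩ L.1 = ∅
          · have hcard : (M.1 ∪ L.1).card = 4 := by
              rw [Finset.card_union_of_disjoint
                (Finset.disjoint_iff_inter_eq_empty.mpr hd), M.2, L.2]
            rw [if_pos hd,
              Finset.sum_eq_single_of_mem (M.1 ∪ L.1)
                (Finset.mem_filter.mpr ⟨Finset.mem_univ _, hcard⟩)
                (fun I _ hI => if_neg fun hc => hI hc.2.symm),
              if_pos ⟨hd, rfl⟩]
            ring
          · rw [if_neg hd]
            exact (Finset.sum_eq_zero fun I _ => if_neg fun hc => hd hc.1).symm
      _ = ∑ I ∈ Finset.univ.filter (fun I : Finset (Fin n) => I.card = 4),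
            ∑ M : V n, ∑ L : V n,
              (if M.1 ∩ L.1 = ∅ ∧ M.1 ∪ L.1 = I then
                θh I H * ((signIJ M.1 L.1 : R) * (g A M * g C L)) else 0) :=
          (sum3_comm _ _).symm
      _ = ∑ I ∈ Finset.univ.filter (fun I : Finset (Fin n) => I.card = 4),
            θh I H * ∑ B : V n, ∑ D : V n,
              (if B.1 ∩ D.1 = ∅ ∧ B.1 ∪ D.1 = I then
                (signIJ B.1 D.1 : R) * (g A B * g C D) else 0) := by
          refine Finset.sum_congr rfl fun I _ => ?_
          simp only [Finset.mul_sum, mul_ite, mul_zero]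
  rw [step3]
  -- Step 4: use the exterior-number conditions of g
  rw [Finset.mul_sum]
  refine Finset.sum_congr rfl fun I hI => ?_
  rw [(hg I (Finset.mem_filter.mp hI).2 A C).2 hAC]
  ring
end

section
/- Let R be a commutative ring, n ≥ 4, i ≠ j in [n], ξ ∈ R, and set g = ∧²t_{i,j}(ξ). Then for every H ∈ ∧⁴[n] and all A, C ∈ ∧²[n] with A ∩ C = ∅: (1) if H = A ∪ C then a_{A,C}^H(g) = sign(A,C); (2) if H ≠ A ∪ C, i ∈ C, j ∉ C, and H = A ⊔ C′ where C′ = (C∖{i})∪{j}, then a_{A,C}^H(g) = sign(A, C′)·g_{C,C′}; (3) if H ≠ A ∪ C, i ∈ A, j ∉ A, and H = A′ ⊔ C where A′ = (A∖{i})∪{j}, then a_{A,C}^H(g) = sign(A′, C)·g_{A,A′}; (4) in all other cases a_{A,C}^H(g) = 0. -/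
open Finset MvPolynomial Matrix

section Aux
variable {R : Type*} [CommRing R] {n : ℕ}

lemma Vpair (I : V n) : ∃ a b : Fin n, a < b ∧ I.1 = {a, b} ∧ lo I = a ∧ hi I = b := by
  obtain ⟨a, b, hab, h⟩ := Finset.card_eq_two.mp I.2
  wlog h1 : a < b generalizing a b
  · exact this b a hab.symm (by rw [h, Finset.pair_comm]) (by omega)
  refine ⟨a, b, h1, h, ?_, ?_⟩
  · refine le_antisymm (Finset.min'_le _ a (by simp [h])) (Finset.le_min' _ _ _ ?_)
    intro y hy
    rw [h] at hy; simp at hy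
    rcases hy with rfl | rfl
    · exact le_refl _
    · exact h1.le
  · refine le_antisymm (Finset.max'_le _ _ _ ?_) (Finset.le_max' _ b (by simp [h]))
    intro y hy
    rw [h] at hy; simp at hy
    rcases hy with rfl | rfl
    · exact h1.le
    · exact le_refl _

lemma tapply (i j : Fin n) (ξ : R) (a b : Fin n) :
    (1 + Matrix.single i j ξ) a b
      = (if a = b then 1 else 0) + (if i = a ∧ j = b then ξ else 0) := by
  simp [Matrix.add_apply, Matrix.one_apply, Matrix.single]

lemma wedge_diag (i j : Fin n) (hij : i ≠ j) (ξ : R) (A : V n) :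
    wedge (1 + Matrix.single i j ξ) A A = 1 := by
  obtain ⟨a, b, hab, hA, hlo, hhi⟩ := Vpair A
  simp only [wedge, hlo, hhi, tapply]
  clear hA
  split_ifs
  all_goals try ring
  all_goals exfalso
  all_goals omega

lemma pair_erase_left (a b : Fin n) (hab : a ≠ b) : ({a, b} : Finset (Fin n)).erase a = {b} := by
  rw [show ({a,b} : Finset (Fin n)) = insert a {b} from rfl,
    Finset.erase_insert (by simp [hab])]

lemma pair_erase_right (a b : Fin n) (hab : a ≠ b) : ({a, b} : Finset (Fin n)).erase b = {a} := by
  rw [Finset.pair_comm]; exact pair_erase_left b a hab.symm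

set_option maxHeartbeats 2000000 in
lemma wedge_supp (i j : Fin n) (hij : i ≠ j) (ξ : R) (A B : V n)
    (hne : B.1 ≠ A.1)
    (h2 : ¬(i ∈ A.1 ∧ j ∉ A.1 ∧ B.1 = insert j (A.1.erase i))) :
    wedge (1 + Matrix.single i j ξ) A B = 0 := by
  obtain ⟨a, b, hab, hA, hloA, hhiA⟩ := Vpair A
  obtain ⟨c, d, hcd, hB, hloB, hhiB⟩ := Vpair B
  have hne' : ¬(c = a ∧ d = b) := fun ⟨e1, e2⟩ => hne (by rw [hB, hA, e1, e2])
  have h2a : ¬(i = a ∧ j ≠ a ∧ j ≠ b ∧ ((c = j ∧ d = b) ∨ (c = b ∧ d = j))) := by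
    rintro ⟨hia, hja, hjb, hcd'⟩
    refine h2 ⟨by rw [hA]; simp [hia], by rw [hA]; simp [hja, hjb], ?_⟩
    rw [hB, hA, hia, pair_erase_left a b hab.ne]
    rcases hcd' with ⟨rfl, rfl⟩ | ⟨rfl, rfl⟩
    · rfl
    · rw [Finset.pair_comm]
  have h2b : ¬(i = b ∧ j ≠ a ∧ j ≠ b ∧ ((c = a ∧ d = j) ∨ (c = j ∧ d = a))) := by
    rintro ⟨hib, hja, hjb, hcd'⟩
    refine h2 ⟨by rw [hA]; simp [hib], by rw [hA]; simp [hja, hjb], ?_⟩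
    rw [hB, hA, hib, pair_erase_right a b hab.ne]
    rcases hcd' with ⟨rfl, rfl⟩ | ⟨rfl, rfl⟩
    · rw [Finset.pair_comm]
    · rfl
  simp only [wedge, hloA, hhiA, hloB, hhiB, tapply]
  clear hA hB hne h2 hloA hhiA hloB hhiB A B
  split_ifs
  all_goals try norm_num
  all_goals exfalso
  all_goals omega

lemma prod_classify (i j : Fin n) (hij : i ≠ j) (ξ : R) (A C : V n)
    (hAC : Disjoint A.1 C.1) (B D : V n) :
    (B = A ∧ D = C) ∨
    (B = A ∧ i ∈ C.1 ∧ j ∉ C.1 ∧ D.1 = insert j (C.1.erase i)) ∨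
    (i ∈ A.1 ∧ j ∉ A.1 ∧ B.1 = insert j (A.1.erase i) ∧ D = C) ∨
    wedge (1 + Matrix.single i j ξ) A B *
      wedge (1 + Matrix.single i j ξ) C D = 0 := by
  by_cases hB : B = A
  · by_cases hD : D = C
    · exact Or.inl ⟨hB, hD⟩
    · by_cases hD' : i ∈ C.1 ∧ j ∉ C.1 ∧ D.1 = insert j (C.1.erase i)
      · exact Or.inr (Or.inl ⟨hB, hD'.1, hD'.2.1, hD'.2.2⟩)
      · exact Or.inr (Or.inr (Or.inr (by
          rw [wedge_supp i j hij ξ C D (fun h => hD (Subtype.ext h)) hD', mul_zero])))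
  · by_cases hB' : i ∈ A.1 ∧ j ∉ A.1 ∧ B.1 = insert j (A.1.erase i)
    · by_cases hD : D = C
      · exact Or.inr (Or.inr (Or.inl ⟨hB'.1, hB'.2.1, hB'.2.2, hD⟩))
      · have hiC : i ∉ C.1 := Finset.disjoint_left.mp hAC hB'.1
        exact Or.inr (Or.inr (Or.inr (by
          rw [wedge_supp i j hij ξ C D (fun h => hD (Subtype.ext h))
            (fun h => hiC h.1), mul_zero])))
    · exact Or.inr (Or.inr (Or.inr (by
        rw [wedge_supp i j hij ξ A B (fun h => hB (Subtype.ext h)) hB', zero_mul])))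

lemma extNum_collapse (g : Matrix (V n) (V n) R) (H : Finset (Fin n)) (A C B₀ D₀ : V n)
    (hzero : ∀ B D : V n, ¬(B = B₀ ∧ D = D₀) →
      (if B.1 ∩ D.1 = ∅ ∧ B.1 ∪ D.1 = H then
        (signIJ B.1 D.1 : R) * (g A B * g C D) else 0) = 0) :
    extNum g H A C = if B₀.1 ∩ D₀.1 = ∅ ∧ B₀.1 ∪ D₀.1 = H then
        (signIJ B₀.1 D₀.1 : R) * (g A B₀ * g C D₀) else 0 := by
  rw [extNum,
    Fintype.sum_eq_single B₀
      (fun B hB => Finset.sum_eq_zero fun D _ => hzero B D (fun h => hB h.1)),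
    Fintype.sum_eq_single D₀ (fun D hD => hzero B₀ D (fun h => hD h.2))]

lemma not_mem_new {I : Finset (Fin n)} {i j : Fin n} (hij : i ≠ j) :
    i ∉ insert j (I.erase i) := by
  simp [hij, Finset.mem_erase]

end Aux

/-- exterior numbers of the exterior square of an elementary transvection
`g = ∧²t_{i,j}(ξ)`: for disjoint `A, C` and `H ∈ ∧⁴[n]`, (1) `a_{A,C}^{A∪C}(g) = sign(A,C)`;
(2) if `H ≠ A∪C`, `i ∈ C`, `j ∉ C` and `H = A ⊔ C'` with `C' = (C∖{i})∪{j}`, then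
`a_{A,C}^H(g) = sign(A,C')·g_{C,C'}`; (3) symmetrically with the roles of `A` and `C`
exchanged; (4) otherwise `a_{A,C}^H(g) = 0`. -/
theorem stmt14 (R : Type*) [CommRing R] (n : ℕ) (hn : 4 ≤ n)
    (i j : Fin n) (hij : i ≠ j) (ξ : R)
    (H : Finset (Fin n)) (hH : H.card = 4) (A C : V n) (hAC : Disjoint A.1 C.1) :
    (H = A.1 ∪ C.1 →
      extNum (wedge (1 + Matrix.single i j ξ)) H A C = (signIJ A.1 C.1 : R)) ∧
    (∀ (hiC : i ∈ C.1) (hjC : j ∉ C.1), H ≠ A.1 ∪ C.1 →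
      H = A.1 ∪ insert j (C.1.erase i) →
      extNum (wedge (1 + Matrix.single i j ξ)) H A C =
        (signIJ A.1 (insert j (C.1.erase i)) : R) *
          wedge (1 + Matrix.single i j ξ) C
            ⟨insert j (C.1.erase i), by
              rw [Finset.card_insert_of_notMem
                    (fun hm => hjC (Finset.mem_of_mem_erase hm)),
                Finset.card_erase_of_mem hiC, C.2]⟩) ∧
    (∀ (hiA : i ∈ A.1) (hjA : j ∉ A.1), H ≠ A.1 ∪ C.1 →
      H = insert j (A.1.erase i) ∪ C.1 →
      extNum (wedge (1 + Matrix.single i j ξ)) H A C =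
        (signIJ (insert j (A.1.erase i)) C.1 : R) *
          wedge (1 + Matrix.single i j ξ) A
            ⟨insert j (A.1.erase i), by
              rw [Finset.card_insert_of_notMem
                    (fun hm => hjA (Finset.mem_of_mem_erase hm)),
                Finset.card_erase_of_mem hiA, A.2]⟩) ∧
    (H ≠ A.1 ∪ C.1 →
      ¬(i ∈ C.1 ∧ j ∉ C.1 ∧ H = A.1 ∪ insert j (C.1.erase i)) →
      ¬(i ∈ A.1 ∧ j ∉ A.1 ∧ H = insert j (A.1.erase i) ∪ C.1) →
      extNum (wedge (1 + Matrix.single i j ξ)) H A C = 0) := by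
  have hAC' : A.1 ∩ C.1 = ∅ := Finset.disjoint_iff_inter_eq_empty.mp hAC
  have hiAC : ∀ x, x ∈ A.1 → x ∉ C.1 := fun x hx => Finset.disjoint_left.mp hAC hx
  have hc4 : (A.1 ∪ C.1).card = 4 := by
    rw [Finset.card_union_of_disjoint hAC, A.2, C.2]
  refine ⟨?_, ?_, ?_, ?_⟩
  · -- Part 1 : H = A ∪ C
    intro h1
    have hz : ∀ B D : V n, ¬(B = A ∧ D = C) →
        (if B.1 ∩ D.1 = ∅ ∧ B.1 ∪ D.1 = H then
          (signIJ B.1 D.1 : R) * (wedge (1 + Matrix.single i j ξ) A B *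
            wedge (1 + Matrix.single i j ξ) C D) else 0) = 0 := by
      intro B D hnot
      rcases prod_classify i j hij ξ A C hAC B D with
        ⟨hB, hD⟩ | ⟨hB, hiC, hjC, hD⟩ | ⟨hiA, hjA, hB, hD⟩ | hp
      · exact absurd ⟨hB, hD⟩ hnot
      · rw [if_neg]
        rintro ⟨-, hu⟩
        have hmem : i ∈ B.1 ∪ D.1 := by
          rw [hu, h1]; exact Finset.mem_union_right _ hiC
        rcases Finset.mem_union.mp hmem with h | h
        · exact hiAC i (hB ▸ h) hiC
        · exact not_mem_new hij (hD ▸ h)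
      · rw [if_neg]
        rintro ⟨-, hu⟩
        have hmem : i ∈ B.1 ∪ D.1 := by
          rw [hu, h1]; exact Finset.mem_union_left _ hiA
        rcases Finset.mem_union.mp hmem with h | h
        · exact not_mem_new hij (hB ▸ h)
        · exact hiAC i hiA (hD ▸ h)
      · simp [hp]
    rw [extNum_collapse _ H A C A C hz, if_pos ⟨hAC', h1.symm⟩,
      wedge_diag i j hij ξ A, wedge_diag i j hij ξ C, mul_one, mul_one]
  · -- Part 2 : H = A ∪ C'
    intro hiC hjC hne h2
    have hiA : i ∉ A.1 := fun h => hiAC i h hiC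
    have hjA : j ∉ A.1 := by
      intro hjA
      have hsub : H ⊆ (A.1 ∪ C.1).erase i := by
        rw [h2]
        intro x hx
        rcases Finset.mem_union.mp hx with hx | hx
        · exact Finset.mem_erase.mpr ⟨fun e => hiA (e ▸ hx), Finset.mem_union_left _ hx⟩
        · rcases Finset.mem_insert.mp hx with rfl | hx
          · exact Finset.mem_erase.mpr ⟨Ne.symm hij, Finset.mem_union_left _ hjA⟩
          · exact Finset.mem_erase.mpr ⟨(Finset.mem_erase.mp hx).1,
              Finset.mem_union_right _ (Finset.mem_of_mem_erase hx)⟩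
      have hle := Finset.card_le_card hsub
      rw [hH, Finset.card_erase_of_mem (Finset.mem_union_right _ hiC), hc4] at hle
      omega
    have hz : ∀ B D : V n, ¬(B = A ∧ D = (⟨insert j (C.1.erase i), by
          rw [Finset.card_insert_of_notMem (fun hm => hjC (Finset.mem_of_mem_erase hm)),
            Finset.card_erase_of_mem hiC, C.2]⟩ : V n)) →
        (if B.1 ∩ D.1 = ∅ ∧ B.1 ∪ D.1 = H then
          (signIJ B.1 D.1 : R) * (wedge (1 + Matrix.single i j ξ) A B *
            wedge (1 + Matrix.single i j ξ) C D) else 0) = 0 := by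
      intro B D hnot
      rcases prod_classify i j hij ξ A C hAC B D with
        ⟨hB, hD⟩ | ⟨hB, hiC', hjC', hD⟩ | ⟨hiA', hjA', hB, hD⟩ | hp
      · rw [if_neg]
        rintro ⟨-, hu⟩
        exact hne (by rw [← hu, hB, hD])
      · exact absurd ⟨hB, Subtype.ext hD⟩ hnot
      · exact absurd hiA' hiA
      · simp [hp]
    have hdisj : A.1 ∩ insert j (C.1.erase i) = ∅ := by
      rw [Finset.eq_empty_iff_forall_notMem]
      intro x hx
      obtain ⟨hxa, hxd⟩ := Finset.mem_inter.mp hx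
      rcases Finset.mem_insert.mp hxd with rfl | hxd
      · exact hjA hxa
      · exact hiAC x hxa (Finset.mem_of_mem_erase hxd)
    rw [extNum_collapse _ H A C _ _ hz, if_pos ⟨hdisj, h2.symm⟩,
      wedge_diag i j hij ξ A, one_mul]
  · -- Part 3 : H = A' ∪ C
    intro hiA hjA hne h2
    have hiC : i ∉ C.1 := hiAC i hiA
    have hjC : j ∉ C.1 := by
      intro hjC
      have hsub : H ⊆ (A.1 ∪ C.1).erase i := by
        rw [h2]
        intro x hx
        rcases Finset.mem_union.mp hx with hx | hx
        · rcases Finset.mem_insert.mp hx with rfl | hx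
          · exact Finset.mem_erase.mpr ⟨Ne.symm hij, Finset.mem_union_right _ hjC⟩
          · exact Finset.mem_erase.mpr ⟨(Finset.mem_erase.mp hx).1,
              Finset.mem_union_left _ (Finset.mem_of_mem_erase hx)⟩
        · exact Finset.mem_erase.mpr ⟨fun e => hiC (e ▸ hx), Finset.mem_union_right _ hx⟩
      have hle := Finset.card_le_card hsub
      rw [hH, Finset.card_erase_of_mem (Finset.mem_union_left _ hiA), hc4] at hle
      omega
    have hz : ∀ B D : V n, ¬(B = (⟨insert j (A.1.erase i), by
          rw [Finset.card_insert_of_notMem (fun hm => hjA (Finset.mem_of_mem_erase hm)),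
            Finset.card_erase_of_mem hiA, A.2]⟩ : V n) ∧ D = C) →
        (if B.1 ∩ D.1 = ∅ ∧ B.1 ∪ D.1 = H then
          (signIJ B.1 D.1 : R) * (wedge (1 + Matrix.single i j ξ) A B *
            wedge (1 + Matrix.single i j ξ) C D) else 0) = 0 := by
      intro B D hnot
      rcases prod_classify i j hij ξ A C hAC B D with
        ⟨hB, hD⟩ | ⟨hB, hiC', hjC', hD⟩ | ⟨hiA', hjA', hB, hD⟩ | hp
      · rw [if_neg]
        rintro ⟨-, hu⟩
        exact hne (by rw [← hu, hB, hD])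
      · exact absurd hiC' hiC
      · exact absurd ⟨Subtype.ext hB, hD⟩ hnot
      · simp [hp]
    have hdisj : insert j (A.1.erase i) ∩ C.1 = ∅ := by
      rw [Finset.eq_empty_iff_forall_notMem]
      intro x hx
      obtain ⟨hxb, hxc⟩ := Finset.mem_inter.mp hx
      rcases Finset.mem_insert.mp hxb with rfl | hxb
      · exact hjC hxc
      · exact hiAC x (Finset.mem_of_mem_erase hxb) hxc
    rw [extNum_collapse _ H A C _ _ hz, if_pos ⟨hdisj, h2.symm⟩,
      wedge_diag i j hij ξ C, mul_one]
  · -- Part 4 : everything else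
    intro hne hnot2 hnot3
    rw [extNum]
    refine Finset.sum_eq_zero fun B _ => Finset.sum_eq_zero fun D _ => ?_
    rcases prod_classify i j hij ξ A C hAC B D with
      ⟨hB, hD⟩ | ⟨hB, hiC, hjC, hD⟩ | ⟨hiA, hjA, hB, hD⟩ | hp
    · rw [if_neg]
      rintro ⟨-, hu⟩
      exact hne (by rw [← hu, hB, hD])
    · rw [if_neg]
      rintro ⟨-, hu⟩
      exact hnot2 ⟨hiC, hjC, by rw [← hu, hB, hD]⟩
    · rw [if_neg]
      rintro ⟨-, hu⟩
      exact hnot3 ⟨hiA, hjA, by rw [← hu, hB, hD]⟩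
    · simp [hp]
end
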